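/- arXiv:1106.1844 — 7 statements merged into one kernel-verified Lean document; each statement's English description precedes it below -/
import Mathlib

section
/- Let (m, m₁, m₂) be a Markoff triple with associated Markoff form f_m, and let θ be an irrational real number that is ± equivalent to a root of f_m(x,1) = 0. Then m·‖m·θ‖ = 2/(3 + √(9 − 4·m⁻²)). -/
noncomputable def distNearestInt (x : ℝ) : ℝ := sInf (Set.range fun p : ℤ => |x - p|)

noncomputable def phi (θ : ℝ) : ℝ :=
  sInf {x : ℝ | ∃ q : ℕ, 0 < q ∧ x = q * distNearestInt (q * θ)}

def PMEquiv (θ θ' : ℝ) : Prop := (∃ k : ℤ, θ + θ' = k) ∨ (∃ k : ℤ, θ - θ' = k)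

def IsMarkoffTriple (m m₁ m₂ : ℤ) : Prop :=
  1 ≤ m₂ ∧ m₂ ≤ m₁ ∧ m₁ ≤ m ∧ m ^ 2 + m₁ ^ 2 + m₂ ^ 2 = 3 * m * m₁ * m₂

def IsMarkoffU (m m₁ m₂ u : ℤ) : Prop :=
  IsLeast {w : ℤ | 0 < w ∧ (m₂ * w ≡ m₁ [ZMOD m] ∨ m₂ * w ≡ -m₁ [ZMOD m])} u

def IsMarkoffFormRoot (m u v : ℤ) (α : ℝ) : Prop :=
  (m : ℝ) * α ^ 2 + (3 * m - 2 * u) * α + ((v : ℝ) - 3 * u) = 0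

noncomputable def cfVal : List ℝ → ℝ
  | [] => 0
  | a :: l => a + 1 / cfVal l

noncomputable def cfInfVal (a : ℕ → ℝ) : ℝ :=
  Filter.limUnder Filter.atTop fun n => cfVal ((List.range (n + 1)).map a)

noncomputable def mu (A : ℕ → ℕ) (n : ℕ) : ℝ :=
  cfVal ((0 : ℝ) :: (List.range n).reverse.map (fun i => (A i : ℝ))) +
    cfInfVal (fun k => (A (n + k) : ℝ))

def form41 (r : ℕ → ℕ) (n : ℕ) : ℕ :=
  if h : n < 2 * r 0 + 2 then (if n = 0 then 2 else if n ≤ 2 * r 0 then 1 else 2)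
  else form41 (fun i => r (i + 1)) (n - (2 * r 0 + 2))
termination_by n
decreasing_by omega

def blockSeq (a b : ℕ) (s : ℕ → ℕ) (n : ℕ) : ℕ :=
  if h : n < s 0 + 1 then (if n < s 0 then a else b)
  else blockSeq a b (fun i => s (i + 1)) (n - (s 0 + 1))
termination_by n
decreasing_by omega

def CondA (r : ℕ → ℕ) : Prop := ∀ i : ℕ, |(r (i + 1) : ℤ) - (r i : ℤ)| ≤ 1

def CondB (r : ℕ → ℕ) : Prop :=
  ∀ i : ℕ,
    ((r (i + 1) + 1 = r i) → ∀ j, 1 ≤ j → j ≤ i →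
      (∀ k, 1 ≤ k → k < j → r (i + k + 1) = r (i - k)) →
      r (i + j + 1) ≠ r (i - j) → r (i - j) < r (i + j + 1)) ∧
    ((r (i + 1) = r i + 1) → ∀ j, 1 ≤ j → j ≤ i →
      (∀ k, 1 ≤ k → k < j → r (i + k + 1) = r (i - k)) →
      r (i + j + 1) ≠ r (i - j) → r (i + j + 1) < r (i - j))

def CondC01 (r : ℕ → ℕ) : Prop :=
  r 0 ≤ r 1 ∧ ∀ i : ℕ, r (i + 1) + 1 = r i → ∃ j, 1 ≤ j ∧ j ≤ i ∧ r (i - j) < r (i + j + 1)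

def CondC10 (r : ℕ → ℕ) : Prop :=
  r 1 ≤ r 0 ∧ ∀ i : ℕ, r (i + 1) = r i + 1 → ∃ j, 1 ≤ j ∧ j ≤ i ∧ r (i + j + 1) < r (i - j)

def MemM01 (r : ℕ → ℕ) : Prop := CondA r ∧ CondB r ∧ CondC01 r
def MemM10 (r : ℕ → ℕ) : Prop := CondA r ∧ CondB r ∧ CondC10 r

def SeqEquiv (r r' : ℕ → ℕ) : Prop := ∃ k l : ℕ, ∀ i, r (k + i) = r' (l + i)

lemma distNearestInt_int_add (n : ℤ) (ε : ℝ) (h : |ε| ≤ 1/2) :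
    distNearestInt ((n : ℝ) + ε) = |ε| := by
  unfold distNearestInt
  apply IsLeast.csInf_eq
  constructor
  · exact ⟨n, by simp⟩
  · rintro x ⟨p, rfl⟩
    by_cases hp : p = n
    · simp [hp]
    · have h1 : (1 : ℝ) ≤ |(n : ℝ) - p| := by
        have : (n : ℝ) - p = ((n - p : ℤ) : ℝ) := by push_cast; ring
        rw [this]
        exact_mod_cast Int.one_le_abs (by omega)
      have h2 : |(n : ℝ) - p| - |ε| ≤ |(n : ℝ) + ε - p| := by
        have := abs_sub_abs_le_abs_sub ((n : ℝ) - p) (-ε)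
        simp only [abs_neg] at this
        calc |(n:ℝ) - p| - |ε| ≤ |(n:ℝ) - p - -ε| := this
        _ = |(n:ℝ) + ε - p| := by ring_nf
      linarith

/-- If θ is irrational and ± equivalent to a root of the Markoff form equation
`f_m(x,1) = 0`, then `m·‖mθ‖ = 2/(3 + √(9 − 4m⁻²))`. -/
theorem markoff_root_dist (m m₁ m₂ u v : ℤ) (θ α : ℝ)
    (hM : IsMarkoffTriple m m₁ m₂) (hu : IsMarkoffU m m₁ m₂ u)
    (hv : m * v = u ^ 2 + 1) (hθ : Irrational θ)
    (hα : IsMarkoffFormRoot m u v α) (hequiv : PMEquiv θ α) :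
    (m : ℝ) * distNearestInt (m * θ) = 2 / (3 + Real.sqrt (9 - 4 / (m : ℝ) ^ 2)) := by
  obtain ⟨h2, h1, h0, -⟩ := hM
  have hm1 : (1 : ℤ) ≤ m := le_trans (le_trans h2 h1) h0
  have hmR : (1 : ℝ) ≤ (m : ℝ) := by exact_mod_cast hm1
  have hmpos : (0 : ℝ) < (m : ℝ) := by linarith
  set s : ℝ := Real.sqrt (9 * (m : ℝ) ^ 2 - 4) with hs_def
  have hs_nonneg : 0 ≤ s := Real.sqrt_nonneg _
  have hs2 : s ^ 2 = 9 * (m : ℝ) ^ 2 - 4 := Real.sq_sqrt (by nlinarith)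
  set δ : ℝ := (3 * (m : ℝ) - s) / 2 with hδ_def
  have hδ_pos : 0 < δ := by
    have : s < 3 * (m : ℝ) := by nlinarith
    simp only [hδ_def]; linarith
  have hδ_le : δ ≤ 1 / 2 := by
    have : 3 * (m : ℝ) - 1 ≤ s := by
      have h' : (3 * (m : ℝ) - 1) ^ 2 ≤ 9 * (m : ℝ) ^ 2 - 4 := by nlinarith
      nlinarith [hs_nonneg, hs2]
    simp only [hδ_def]; linarith
  have hvR : (m : ℝ) * v = (u : ℝ) ^ 2 + 1 := by exact_mod_cast hv
  -- the two possible values of m * α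
  have hroot : ((m : ℝ) * α - ((u : ℝ) - 3 * m + δ)) * ((m : ℝ) * α - ((u : ℝ) - δ)) = 0 := by
    have hα' := hα
    unfold IsMarkoffFormRoot at hα'
    push_cast at hα'
    linear_combination (m : ℝ) * hα' - hvR - (1 / 4) * hs2
  -- so m * θ = N + ε with |ε| = δ
  have key : ∃ (N : ℤ) (ε : ℝ), |ε| = δ ∧ (m : ℝ) * θ = (N : ℝ) + ε := by
    rcases mul_eq_zero.1 hroot with h | h
    · have hmα : (m : ℝ) * α = (u : ℝ) - 3 * m + δ := by linarith
      rcases hequiv with ⟨k, hk⟩ | ⟨k, hk⟩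
      · refine ⟨m * k - u + 3 * m, -δ, by simp [abs_of_pos hδ_pos], ?_⟩
        have : θ = (k : ℝ) - α := by linarith
        rw [this]; push_cast; linarith [hmα]
      · refine ⟨m * k + u - 3 * m, δ, abs_of_pos hδ_pos, ?_⟩
        have : θ = (k : ℝ) + α := by linarith
        rw [this]; push_cast; linarith [hmα]
    · have hmα : (m : ℝ) * α = (u : ℝ) - δ := by linarith
      rcases hequiv with ⟨k, hk⟩ | ⟨k, hk⟩
      · refine ⟨m * k - u, δ, abs_of_pos hδ_pos, ?_⟩
        have : θ = (k : ℝ) - α := by linarith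
        rw [this]; push_cast; linarith [hmα]
      · refine ⟨m * k + u, -δ, by simp [abs_of_pos hδ_pos], ?_⟩
        have : θ = (k : ℝ) + α := by linarith
        rw [this]; push_cast; linarith [hmα]
  obtain ⟨N, ε, hε, hNε⟩ := key
  rw [hNε, distNearestInt_int_add N ε (by rw [hε]; exact hδ_le), hε]
  -- now prove m * δ = 2 / (3 + sqrt (9 - 4 / m²))
  have hsq : Real.sqrt (9 - 4 / (m : ℝ) ^ 2) = s / m := by
    rw [show (9 : ℝ) - 4 / (m : ℝ) ^ 2 = (s / m) ^ 2 by
      field_simp; linarith [hs2]]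
    exact Real.sqrt_sq (by positivity)
  rw [hsq]
  have hden : 0 < 3 + s / (m : ℝ) := by positivity
  rw [eq_div_iff (ne_of_gt hden)]
  simp only [hδ_def]
  field_simp
  nlinarith [hs2]
end

section
/- Let m > 2, u, v be positive integers and let S = s₁, …, s_k be a finite symmetric sequence of positive integers (i.e. s_i = s_{k+1−i} for all i) such that v/u = [0; 2, S] and u/m = [0; 2, S, 2]. Let β be the negative root of m·x² + (3m − 2u)·x + (v − 3u) = 0. Then −β − 2 = [0; overline{1, 1, S, 2, 2}], i.e. −β − 2 equals the value of the purely periodic continued fraction with repeating block 1, 1, s₁, …, s_k, 2, 2. -/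
open Matrix

noncomputable def Mt (a : ℝ) : Matrix (Fin 2) (Fin 2) ℝ := !![a, 1; 1, 0]
noncomputable def ML (l : List ℝ) : Matrix (Fin 2) (Fin 2) ℝ := (l.map Mt).prod
lemma ML_nil : ML [] = 1 := rfl
lemma ML_cons (a : ℝ) (l : List ℝ) : ML (a :: l) = Mt a * ML l := by simp [ML]
lemma ML_append (l l' : List ℝ) : ML (l ++ l') = ML l * ML l' := by simp [ML]
lemma Mt_symm (a : ℝ) : (Mt a)ᵀ = Mt a := by
  ext i j; fin_cases i <;> fin_cases j <;> simp [Mt]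
lemma ML_reverse (l : List ℝ) : ML l.reverse = (ML l)ᵀ := by
  induction l with
  | nil => simp [ML_nil]
  | cons a l ih =>
    simp [List.reverse_cons, ML_append, ML_cons, ih, Matrix.transpose_mul, Mt_symm, ML_nil]
lemma ML_cons00 (a : ℝ) (l : List ℝ) : ML (a :: l) 0 0 = a * ML l 0 0 + ML l 1 0 := by
  simp [ML_cons, Mt, Matrix.mul_apply, Fin.sum_univ_two]
lemma ML_cons01 (a : ℝ) (l : List ℝ) : ML (a :: l) 0 1 = a * ML l 0 1 + ML l 1 1 := by
  simp [ML_cons, Mt, Matrix.mul_apply, Fin.sum_univ_two]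
lemma ML_cons10 (a : ℝ) (l : List ℝ) : ML (a :: l) 1 0 = ML l 0 0 := by
  simp [ML_cons, Mt, Matrix.mul_apply, Fin.sum_univ_two]
lemma ML_cons11 (a : ℝ) (l : List ℝ) : ML (a :: l) 1 1 = ML l 0 1 := by
  simp [ML_cons, Mt, Matrix.mul_apply, Fin.sum_univ_two]
lemma ML_one00 : ML [] 0 0 = 1 := by simp [ML_nil]
lemma ML_one01 : ML [] 0 1 = 0 := by simp [ML_nil]
lemma ML_one10 : ML [] 1 0 = 0 := by simp [ML_nil]
lemma ML_one11 : ML [] 1 1 = 1 := by simp [ML_nil]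

def Ones (l : List ℝ) : Prop := ∀ x ∈ l, 1 ≤ x

/-- basic entry bounds for any list with entries ≥ 1 -/
lemma ML_basic (l : List ℝ) (h : Ones l) :
    1 ≤ ML l 0 0 ∧ 0 ≤ ML l 0 1 ∧ 0 ≤ ML l 1 0 ∧ 0 ≤ ML l 1 1 := by
  induction l with
  | nil => norm_num [ML_one00, ML_one01, ML_one10, ML_one11]
  | cons a l ih =>
    have ha : 1 ≤ a := h a (by simp)
    obtain ⟨h1, h2, h3, h4⟩ := ih (fun x hx => h x (by simp [hx]))
    refine ⟨?_, ?_, ?_, ?_⟩ <;>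
      simp only [ML_cons00, ML_cons01, ML_cons10, ML_cons11] <;> nlinarith

/-- chain inequalities for nonempty lists -/
lemma ML_chain (l : List ℝ) (h : Ones l) (hne : l ≠ []) :
    ML l 1 1 ≤ ML l 0 1 ∧ ML l 0 1 ≤ ML l 0 0 ∧ ML l 1 1 ≤ ML l 1 0 ∧
      ML l 1 0 ≤ ML l 0 0 ∧ 1 ≤ ML l 1 0 := by
  induction l with
  | nil => exact absurd rfl hne
  | cons a l ih =>
    have ha : 1 ≤ a := h a (by simp)
    have hl : Ones l := fun x hx => h x (by simp [hx])
    rcases eq_or_ne l [] with rfl | hlne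
    · norm_num [ML_cons00, ML_cons01, ML_cons10, ML_cons11,
        ML_one00, ML_one01, ML_one10, ML_one11]; linarith
    · obtain ⟨i1, i2, i3, i4, i5⟩ := ih hl hlne
      obtain ⟨b1, b2, b3, b4⟩ := ML_basic l hl
      refine ⟨?_, ?_, ?_, ?_, ?_⟩ <;>
        simp only [ML_cons00, ML_cons01, ML_cons10, ML_cons11] <;> nlinarith

lemma cfVal_pos (l : List ℝ) (h : Ones l) : 0 ≤ cfVal l := by
  induction l with
  | nil => simp [cfVal]
  | cons a l ih =>
    have ha : 1 ≤ a := h a (by simp)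
    have := ih (fun x hx => h x (by simp [hx]))
    have : (0:ℝ) ≤ 1 / cfVal l := by positivity
    simp only [cfVal]; linarith

lemma cfVal_eq (l : List ℝ) (h : Ones l) : cfVal l = ML l 0 0 / ML l 1 0 := by
  induction l with
  | nil => simp [cfVal, ML_one00, ML_one10]
  | cons a l ih =>
    have hl : Ones l := fun x hx => h x (by simp [hx])
    have h00 : 1 ≤ ML l 0 0 := (ML_basic l hl).1
    have hne : ML l 0 0 ≠ 0 := by linarith
    rw [show cfVal (a :: l) = a + 1 / cfVal l from rfl, ih hl, ML_cons00, ML_cons10,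
      one_div_div]
    field_simp

noncomputable def act (l : List ℝ) (s : ℝ) : ℝ :=
  (ML l 0 0 * s + ML l 0 1) / (ML l 1 0 * s + ML l 1 1)

lemma act_nil (s : ℝ) : act [] s = s := by
  simp [act, ML_one00, ML_one01, ML_one10, ML_one11]

lemma act_num_pos (l : List ℝ) (h : Ones l) (s : ℝ) (hs : 0 < s) :
    0 < ML l 0 0 * s + ML l 0 1 := by
  obtain ⟨b1, b2, b3, b4⟩ := ML_basic l h; nlinarith

lemma act_denom_pos (l : List ℝ) (h : Ones l) (s : ℝ) (hs : 0 < s) :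
    0 < ML l 1 0 * s + ML l 1 1 := by
  rcases eq_or_ne l [] with rfl | hne
  · simpa [ML_one10, ML_one11] using by linarith
  · obtain ⟨i1, i2, i3, i4, i5⟩ := ML_chain l h hne
    obtain ⟨b1, b2, b3, b4⟩ := ML_basic l h
    nlinarith

lemma act_pos (l : List ℝ) (h : Ones l) (s : ℝ) (hs : 0 < s) : 0 < act l s :=
  div_pos (act_num_pos l h s hs) (act_denom_pos l h s hs)

lemma act_cons (a : ℝ) (l : List ℝ) (h : Ones l) (s : ℝ) (hs : 0 < s) :
    act (a :: l) s = a + 1 / act l s := by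
  have hn := act_num_pos l h s hs
  have hd := act_denom_pos l h s hs
  rw [act, ML_cons00, ML_cons01, ML_cons10, ML_cons11, act, one_div_div]
  rw [div_eq_iff hn.ne'] at *
  field_simp
  ring

lemma act_gt_one (a : ℝ) (l : List ℝ) (h : Ones (a :: l)) (s : ℝ) (hs : 0 < s) :
    1 < act (a :: l) s := by
  have ha : 1 ≤ a := h a (by simp)
  have hl : Ones l := fun x hx => h x (by simp [hx])
  have := act_pos l hl s hs
  rw [act_cons a l hl s hs]
  have : 0 < 1 / act l s := by positivity
  linarith

lemma ML_app00 (l : List ℝ) (a : ℝ) : ML (l ++ [a]) 0 0 = a * ML l 0 0 + ML l 0 1 := by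
  rw [ML_append]; simp [ML_cons, ML_nil, Mt, Matrix.mul_apply, Fin.sum_univ_two]; ring
lemma ML_app01 (l : List ℝ) (a : ℝ) : ML (l ++ [a]) 0 1 = ML l 0 0 := by
  rw [ML_append]; simp [ML_cons, ML_nil, Mt, Matrix.mul_apply, Fin.sum_univ_two]
lemma ML_app10 (l : List ℝ) (a : ℝ) : ML (l ++ [a]) 1 0 = a * ML l 1 0 + ML l 1 1 := by
  rw [ML_append]; simp [ML_cons, ML_nil, Mt, Matrix.mul_apply, Fin.sum_univ_two]; ring
lemma ML_app11 (l : List ℝ) (a : ℝ) : ML (l ++ [a]) 1 1 = ML l 1 0 := by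
  rw [ML_append]; simp [ML_cons, ML_nil, Mt, Matrix.mul_apply, Fin.sum_univ_two]

lemma act_app (l : List ℝ) (h : Ones l) (a : ℝ) (ha : 1 ≤ a) (s : ℝ) (hs : 0 < s) :
    act (l ++ [a]) s = act l (a + 1 / s) := by
  have h' : Ones (l ++ [a]) := by
    intro x hx; rcases List.mem_append.1 hx with hx | hx
    · exact h x hx
    · simp at hx; simpa [hx]
  have has : 0 < a + 1 / s := by positivity
  have hd1 := act_denom_pos (l ++ [a]) h' s hs
  have hd2 := act_denom_pos l h _ has
  rw [ML_app10, ML_app11] at hd1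
  rw [act, act, ML_app00, ML_app01, ML_app10, ML_app11, div_eq_div_iff hd1.ne' hd2.ne']
  field_simp
  ring

lemma det_ML (l : List ℝ) :
    ML l 0 0 * ML l 1 1 - ML l 0 1 * ML l 1 0 = (-1 : ℝ) ^ l.length := by
  induction l with
  | nil => simp [ML_one00, ML_one01, ML_one10, ML_one11]
  | cons a l ih =>
    rw [ML_cons00, ML_cons01, ML_cons10, ML_cons11, List.length_cons, pow_succ]
    nlinarith [ih]

open Filter in
lemma conv_main (b : ℕ → ℝ) (hb : ∀ i, 1 ≤ b i) (t : ℕ → ℝ)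
    (ht1 : ∀ n, 1 < t n) (htrec : ∀ n, t n = b n + 1 / t (n + 1)) :
    Tendsto (fun n => cfVal ((List.range n).map b)) atTop (nhds (t 0)) := by
  set L : ℕ → List ℝ := fun n => (List.range n).map b with hL
  have hOnes : ∀ n, Ones (L n) := by
    intro n x hx
    simp only [hL, List.mem_map] at hx
    obtain ⟨i, _, rfl⟩ := hx; exact hb i
  have hLsucc : ∀ n, L (n + 1) = L n ++ [b n] := by
    intro n; simp [hL, List.range_succ]
  have htpos : ∀ n, (0:ℝ) < t n := fun n => lt_trans one_pos (ht1 n)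
  have key : ∀ n, t 0 = act (L n) (t n) := by
    intro n
    induction n with
    | zero => simp [hL, act_nil]
    | succ n ih =>
      rw [hLsucc, act_app (L n) (hOnes n) (b n) (hb n) (t (n+1)) (htpos (n+1)),
        ← htrec n]
      exact ih
  have hq1 : ∀ n, 1 ≤ ML (L (n+1)) 1 0 := by
    intro n
    have hne : L (n+1) ≠ [] := by simp [hL, List.range_succ]
    exact (ML_chain _ (hOnes (n+1)) hne).2.2.2.2
  have hq0 : ∀ n, 0 ≤ ML (L n) 1 0 := fun n => (ML_basic _ (hOnes n)).2.2.1
  have hstep : ∀ n, ML (L (n+1)) 1 0 + ML (L n) 1 0 ≤ ML (L (n+2)) 1 0 := by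
    intro n
    have e1 : ML (L (n+2)) 1 0 = b (n+1) * ML (L (n+1)) 1 0 + ML (L (n+1)) 1 1 := by
      rw [hLsucc (n+1), ML_app10]
    have e2 : ML (L (n+1)) 1 1 = ML (L n) 1 0 := by rw [hLsucc n, ML_app11]
    nlinarith [hb (n+1), hq0 (n+1)]
  have hgrow : ∀ n : ℕ, (n : ℝ) ≤ ML (L (n+1)) 1 0 := by
    intro n
    induction n with
    | zero => simpa using (hq0 1)
    | succ n ih =>
      rcases Nat.eq_zero_or_pos n with rfl | hn
      · have := hstep 0
        have := hq1 0
        have := hq0 0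
        push_cast
        linarith
      · have h1 : (1:ℝ) ≤ ML (L n) 1 0 := by
          obtain ⟨m, rfl⟩ := Nat.exists_eq_succ_of_ne_zero hn.ne'
          exact hq1 m
        have := hstep n
        push_cast
        linarith
  have herr : ∀ n, ‖cfVal (L (n+2)) - t 0‖ ≤ ((n:ℝ) + 1)⁻¹ := by
    intro n
    set X := ML (L (n+2)) with hX
    have hO := hOnes (n+2)
    obtain ⟨b1, b2, b3, b4⟩ := ML_basic _ hO
    have hq : (1:ℝ) ≤ X 1 0 := hq1 (n+1)
    have hT := ht1 (n+2)
    have hden : 0 < X 1 0 * t (n+2) + X 1 1 := by nlinarith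
    have hdiff : cfVal (L (n+2)) - t 0 =
        (X 0 0 * X 1 1 - X 0 1 * X 1 0) / (X 1 0 * (X 1 0 * t (n+2) + X 1 1)) := by
      rw [cfVal_eq _ hO, key (n+2), act, ← hX]
      have hX10 : X 1 0 ≠ 0 := by linarith
      have hden' := hden.ne'
      field_simp
      ring
    rw [hdiff, det_ML]
    rw [Real.norm_eq_abs, abs_div, abs_pow, abs_neg, abs_one, one_pow]
    have hpos : 0 < X 1 0 * (X 1 0 * t (n+2) + X 1 1) := by positivity
    rw [abs_of_pos hpos]
    have hg : (n:ℝ) + 1 ≤ X 1 0 * (X 1 0 * t (n+2) + X 1 1) := by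
      have := hgrow (n+1)
      push_cast at this
      nlinarith
    rw [div_le_iff₀ hpos, inv_mul_eq_div, le_div_iff₀ (by positivity)]
    nlinarith
  have hzero : Tendsto (fun n => cfVal (L n) - t 0) atTop (nhds 0) := by
    refine squeeze_zero_norm' (a := fun n : ℕ => ((n:ℝ) - 1)⁻¹) ?_ ?_
    · filter_upwards [eventually_ge_atTop 2] with n hn
      obtain ⟨k, rfl⟩ : ∃ k, n = k + 2 := ⟨n - 2, by omega⟩
      have := herr k
      have : ((k:ℝ) + 2 - 1)⁻¹ = ((k:ℝ)+1)⁻¹ := by ring_nf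
      push_cast
      rw [this]
      exact herr k
    · have h1 : Tendsto (fun n : ℕ => (n:ℝ) - 1) atTop atTop :=
        tendsto_atTop_add_const_right _ _ tendsto_natCast_atTop_atTop
      exact h1.inv_tendsto_atTop
  have := hzero.add_const (t 0)
  simpa using this

lemma listCast_eq (S : List ℕ) : (S.map (fun x => (x : ℝ))) = S.map (fun x : ℕ => (x : ℝ)) := by
  induction S with
  | nil => rfl
  | cons a l ih => simpa using ih

lemma aux_disc_nonneg (A B C : ℝ) (hA : 0 < A) (hC : 0 < C) :
    (0:ℝ) ≤ B ^ 2 + 4 * A * C := by nlinarith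

lemma aux_root_gt (A B C s : ℝ) (hC : 0 < C) (hACB : 0 < B + A - C)
    (hs2 : s ^ 2 = B ^ 2 + 4 * A * C) (hsnn : 0 ≤ s) : 1 * (2 * C) < B + s := by
  nlinarith [mul_pos hC hACB]

lemma aux_denom_pos (P Q R y : ℝ) (hP1 : 1 ≤ P) (hQ0 : 0 ≤ Q) (hR0 : 0 ≤ R)
    (hy : 0 < y) : (0:ℝ) < (5 * P + 7 * Q + 2 * R) * y + (2 * P + 3 * Q + R) := by
  nlinarith

lemma aux_contra (A B x1 x2 : ℝ) (hA : 0 < A) (h2B3A : 0 ≤ 2 * B - 3 * A)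
    (hx1 : 1 / 2 < x1) (hx2 : -2 < x2) (h : A * (x1 + x2) + B = 0) : False := by
  nlinarith [mul_pos hA (show (0:ℝ) < x1 + x2 + 3 / 2 by linarith)]


set_option maxHeartbeats 1000000 in
/-- Lemma 2.1, first part: `−β − 2 = [0; overline{1,1,S,2,2}]`. -/
theorem neg_root_cf (m u v : ℕ) (hm : 2 < m) (hu : 0 < u) (hv : 0 < v)
    (S : List ℕ) (hSpos : ∀ x ∈ S, 0 < x) (hSsym : S.reverse = S)
    (h1 : (v : ℝ) / u = cfVal (0 :: 2 :: S.map (fun x => (x : ℝ))))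
    (h2 : (u : ℝ) / m = cfVal (0 :: 2 :: (S.map (fun x => (x : ℝ)) ++ [2])))
    (β : ℝ) (hβ : (m : ℝ) * β ^ 2 + (3 * m - 2 * u) * β + ((v : ℝ) - 3 * u) = 0)
    (hβneg : β < 0) :
    -β - 2 = cfInfVal (fun n => if n = 0 then (0 : ℝ)
      else (((1 :: 1 :: (S ++ [2, 2])).getD ((n - 1) % (S.length + 4)) 0 : ℕ) : ℝ)) := by
  classical
  rw [listCast_eq] at h1 h2
  set Sc : List ℝ := S.map (fun x : ℕ => (x : ℝ)) with hSc
  have hScOnes : Ones Sc := by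
    intro x hx
    rw [hSc, List.mem_map] at hx
    obtain ⟨n, hn, rfl⟩ := hx
    exact_mod_cast hSpos n hn
  set P := ML Sc 0 0 with hP'
  set Q := ML Sc 0 1 with hQ'
  set R := ML Sc 1 1 with hR'
  obtain ⟨hP1, hQ0, hQ10, hR0⟩ := ML_basic Sc hScOnes
  rw [← hP'] at hP1
  rw [← hQ'] at hQ0
  rw [← hR'] at hR0
  have hsym : ML Sc 1 0 = Q := by
    have hrev : Sc.reverse = Sc := by rw [hSc, ← List.map_reverse, hSsym]
    have h := ML_reverse Sc
    rw [hrev] at h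
    have := congrFun (congrFun h 0) 1
    simpa [Matrix.transpose_apply] using this.symm
  have hR4 : R ≤ 4 * P := by
    rcases eq_or_ne Sc [] with h0 | h0
    · rw [h0, ML_one00] at hP'
      rw [h0, ML_one11] at hR'
      rw [hP', hR']; norm_num
    · obtain ⟨i1, i2, _, _, _⟩ := ML_chain Sc hScOnes h0
      rw [← hR'] at i1
      rw [← hQ'] at i1 i2
      rw [← hP'] at i2
      linarith
  -- entries of ML (Sc ++ [2])
  have e00 : ML (Sc ++ [2]) 0 0 = 2 * P + Q := by rw [ML_app00, ← hP', ← hQ']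
  have e01 : ML (Sc ++ [2]) 0 1 = P := by rw [ML_app01, ← hP']
  have e10 : ML (Sc ++ [2]) 1 0 = 2 * Q + R := by rw [ML_app10, hsym, ← hR']
  have e11 : ML (Sc ++ [2]) 1 1 = Q := by rw [ML_app11, hsym]
  have happ : Sc ++ [(2:ℝ), 2] = (Sc ++ [2]) ++ [2] := by simp
  have f00 : ML (Sc ++ [2, 2]) 0 0 = 5 * P + 2 * Q := by
    rw [happ, ML_app00, e00, e01]; ring
  have f01 : ML (Sc ++ [2, 2]) 0 1 = 2 * P + Q := by rw [happ, ML_app01, e00]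
  have f10 : ML (Sc ++ [2, 2]) 1 0 = 5 * Q + 2 * R := by
    rw [happ, ML_app10, e10, e11]; ring
  have f11 : ML (Sc ++ [2, 2]) 1 1 = 2 * Q + R := by rw [happ, ML_app11, e10]
  set Bl : List ℝ := 1 :: 1 :: (Sc ++ [2, 2]) with hBl
  have hBlOnes : Ones Bl := by
    intro x hx
    rw [hBl] at hx
    simp only [List.mem_cons, List.mem_append, List.mem_singleton] at hx
    rcases hx with rfl | rfl | hx | hx
    · norm_num
    · norm_num
    · exact hScOnes x hx
    · simp at hx; rcases hx with rfl | rfl <;> norm_num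
  have g00 : ML (1 :: (Sc ++ [2, 2])) 0 0 = 5 * P + 7 * Q + 2 * R := by
    rw [ML_cons00, f00, f10]; ring
  have g01 : ML (1 :: (Sc ++ [2, 2])) 0 1 = 2 * P + 3 * Q + R := by
    rw [ML_cons01, f01, f11]; ring
  have g10 : ML (1 :: (Sc ++ [2, 2])) 1 0 = 5 * P + 2 * Q := by rw [ML_cons10, f00]
  have g11 : ML (1 :: (Sc ++ [2, 2])) 1 1 = 2 * P + Q := by rw [ML_cons11, f01]
  have T00 : ML Bl 0 0 = 10 * P + 9 * Q + 2 * R := by rw [hBl, ML_cons00, g00, g10]; ring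
  have T01 : ML Bl 0 1 = 4 * P + 4 * Q + R := by rw [hBl, ML_cons01, g01, g11]; ring
  have T10 : ML Bl 1 0 = 5 * P + 7 * Q + 2 * R := by rw [hBl, ML_cons10, g00]
  have T11 : ML Bl 1 1 = 2 * P + 3 * Q + R := by rw [hBl, ML_cons11, g01]
  clear_value P Q R
  set A : ℝ := 4 * P + 4 * Q + R with hA'
  set B : ℝ := 8 * P + 6 * Q + R with hB'
  set C : ℝ := 5 * P + 7 * Q + 2 * R with hC'
  have hApos : 0 < A := by rw [hA']; linarith
  have hBpos : 0 < B := by rw [hB']; linarith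
  have hCpos : 0 < C := by rw [hC']; linarith
  have hACB : 0 < B + A - C := by rw [hA', hB', hC']; linarith
  have h2B3A : 0 ≤ 2 * B - 3 * A := by rw [hA', hB']; linarith
  clear_value A B C
  -- the periodic value y
  have hDnn : (0:ℝ) ≤ B ^ 2 + 4 * A * C := aux_disc_nonneg A B C hApos hCpos
  set s : ℝ := Real.sqrt (B ^ 2 + 4 * A * C) with hs'
  have hs2 : s ^ 2 = B ^ 2 + 4 * A * C := Real.sq_sqrt hDnn
  have hsnn : 0 ≤ s := Real.sqrt_nonneg _
  clear_value s
  set y : ℝ := (B + s) / (2 * C) with hy'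
  clear_value y
  have hy : C * y ^ 2 - B * y - A = 0 := by
    have hkey : C * ((B + s) / (2 * C)) ^ 2 - B * ((B + s) / (2 * C)) - A
        = (s ^ 2 - (B ^ 2 + 4 * A * C)) / (4 * C) := by
      field_simp
      ring
    rw [hy', hkey, hs2, sub_self, zero_div]
  have hy1 : 1 < y := by
    rw [hy', lt_div_iff₀ (by linarith)]
    exact aux_root_gt A B C s hCpos hACB hs2 hsnn
  have hypos : 0 < y := by linarith
  have hyne : y ≠ 0 := by linarith
  -- fixed point
  have hfix : act Bl y = y := by
    rw [act, T00, T01, T10, T11,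
      div_eq_iff (show C * y + (2 * P + 3 * Q + R) ≠ 0 from by
        rw [hC']; exact (aux_denom_pos P Q R y hP1 hQ0 hR0 hypos).ne')]
    linear_combination (-1 : ℝ) * hy - y * hB' + hA' - hA' 
  have hylt2 : y < 2 := by
    have hrest : Ones (1 :: (Sc ++ [2, 2])) := fun x hx =>
      hBlOnes x (by rw [hBl]; exact List.mem_cons_of_mem _ hx)
    have hgt : 1 < act (1 :: (Sc ++ [2, 2])) y := act_gt_one _ _ hrest y hypos
    have hact : act Bl y = 1 + 1 / act (1 :: (Sc ++ [2, 2])) y := by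
      rw [hBl]; exact act_cons 1 _ hrest y hypos
    rw [hfix] at hact
    have h1' : 1 / act (1 :: (Sc ++ [2, 2])) y < 1 := by
      rw [div_lt_one (by linarith)]; linarith
    linarith
  -- the sequence b and remainders t
  set p : ℕ := S.length + 4 with hp'
  have hplen : Bl.length = p := by rw [hBl, hp', hSc]; simp
  have hppos : 0 < p := by rw [hp']; omega
  set b : ℕ → ℝ := fun i => Bl.getD (i % p) 0 with hb'
  have hmodlt : ∀ n : ℕ, n % p < Bl.length := by
    intro n; rw [hplen]; exact Nat.mod_lt _ hppos
  have hb : ∀ i, 1 ≤ b i := by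
    intro i
    simp only [hb']
    rw [List.getD_eq_getElem _ _ (hmodlt i)]
    exact hBlOnes _ (List.getElem_mem _)
  set t : ℕ → ℝ := fun n => act (Bl.drop (n % p)) y with ht'
  have hdropOnes : ∀ i, Ones (Bl.drop i) := fun i x hx => hBlOnes x (List.drop_subset _ _ hx)
  have ht1 : ∀ n, 1 < t n := by
    intro n
    simp only [ht']
    rw [List.drop_eq_getElem_cons (hmodlt n)]
    exact act_gt_one _ _
      (by rw [← List.drop_eq_getElem_cons (hmodlt n)]; exact hdropOnes _) y hypos
  have htrec : ∀ n, t n = b n + 1 / t (n + 1) := by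
    intro n
    have hlt := hmodlt n
    have htail : Ones (Bl.drop (n % p + 1)) := hdropOnes _
    have hbn : b n = Bl[n % p]'hlt := by
      simp only [hb']; exact List.getD_eq_getElem _ _ hlt
    have hcons : t n = Bl[n % p]'hlt + 1 / act (Bl.drop (n % p + 1)) y := by
      simp only [ht']
      rw [List.drop_eq_getElem_cons hlt, act_cons _ _ htail y hypos]
    rw [hcons, hbn]
    have h1p : 1 % p = 1 := Nat.mod_eq_of_lt (by rw [hp']; omega)
    have hltp : n % p < p := Nat.mod_lt _ hppos
    rcases Nat.lt_or_ge (n % p + 1) p with hlt2 | hge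
    · have hmod : (n + 1) % p = n % p + 1 := by
        rw [Nat.add_mod, h1p, Nat.mod_eq_of_lt hlt2]
      simp only [ht', hmod]
    · have heq : n % p + 1 = p := le_antisymm (Nat.succ_le_of_lt hltp) hge
      have hmod : (n + 1) % p = 0 := by
        rw [Nat.add_mod, h1p, heq, Nat.mod_self]
      have hdropnil : Bl.drop (n % p + 1) = [] := by
        apply List.drop_eq_nil_of_le
        rw [hplen, heq]
      simp only [ht', hmod, hdropnil, act_nil, Nat.zero_mod, List.drop_zero]
      rw [hfix]
  have ht0 : t 0 = y := by
    simp only [ht', Nat.zero_mod, List.drop_zero]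
    exact hfix
  have hconv := conv_main b hb t ht1 htrec
  rw [ht0] at hconv
  -- identify the sequence in the goal
  have hBln : Bl = (1 :: 1 :: (S ++ [2, 2])).map (fun x : ℕ => (x : ℝ)) := by
    rw [hBl, hSc]; simp
  have hlen2 : (1 :: 1 :: (S ++ [2, 2])).length = p := by rw [hp']; simp
  have hbeq : ∀ i : ℕ,
      (fun n => if n = 0 then (0 : ℝ)
        else (((1 :: 1 :: (S ++ [2, 2])).getD ((n - 1) % p) 0 : ℕ) : ℝ)) (i + 1) = b i := by
    intro i
    simp only [Nat.succ_ne_zero, if_false, Nat.add_sub_cancel]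
    have hlt : i % p < (1 :: 1 :: (S ++ [2, 2])).length := by
      rw [hlen2]; exact Nat.mod_lt _ hppos
    rw [List.getD_eq_getElem _ _ hlt]
    simp only [hb']
    rw [List.getD_eq_getElem _ _ (hmodlt i)]
    have : Bl[i % p]'(hmodlt i) =
        ((1 :: 1 :: (S ++ [2, 2])).map (fun x : ℕ => (x : ℝ)))[i % p]'(by
          rw [List.length_map]; exact hlt) := by
      congr 1
    rw [this, List.getElem_map]
  have hra : ∀ n : ℕ, (List.range (n + 1)).map (fun n => if n = 0 then (0 : ℝ)
      else (((1 :: 1 :: (S ++ [2, 2])).getD ((n - 1) % p) 0 : ℕ) : ℝ)) =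
      0 :: (List.range n).map b := by
    intro n
    rw [List.range_succ_eq_map, List.map_cons, List.map_map]
    refine congrArg₂ _ (by simp) ?_
    exact List.map_congr_left (fun i _ => hbeq i)
  have hlim : Filter.Tendsto (fun n => cfVal ((List.range (n + 1)).map
      (fun n => if n = 0 then (0 : ℝ)
        else (((1 :: 1 :: (S ++ [2, 2])).getD ((n - 1) % p) 0 : ℕ) : ℝ))))
      Filter.atTop (nhds (1 / y)) := by
    have heq : ∀ n : ℕ, cfVal ((List.range (n + 1)).map (fun n => if n = 0 then (0 : ℝ)
        else (((1 :: 1 :: (S ++ [2, 2])).getD ((n - 1) % p) 0 : ℕ) : ℝ))) =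
        (cfVal ((List.range n).map b))⁻¹ := by
      intro n
      rw [hra n, show cfVal (0 :: (List.range n).map b)
        = 0 + 1 / cfVal ((List.range n).map b) from rfl]
      rw [zero_add, one_div]
    rw [funext heq, show (1:ℝ)/y = y⁻¹ from one_div y]
    exact hconv.inv₀ hyne
  have hcfInf : cfInfVal (fun n => if n = 0 then (0 : ℝ)
      else (((1 :: 1 :: (S ++ [2, 2])).getD ((n - 1) % p) 0 : ℕ) : ℝ)) = 1 / y :=
    hlim.limUnder_eq
  rw [hcfInf]
  -- now the algebraic part
  have hOnes2Sc : Ones (2 :: Sc) := by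
    intro x hx
    rcases List.mem_cons.1 hx with rfl | hx
    · norm_num
    · exact hScOnes x hx
  have hOnes2Sc2 : Ones (2 :: (Sc ++ [2])) := by
    intro x hx
    rcases List.mem_cons.1 hx with rfl | hx
    · norm_num
    · rcases List.mem_append.1 hx with hx | hx
      · exact hScOnes x hx
      · simp at hx; rw [hx]; norm_num
  have hPpos : (0:ℝ) < P := by linarith
  have h2PQ : (0:ℝ) < 2 * P + Q := by linarith
  have hune : (u:ℝ) ≠ 0 := Nat.cast_ne_zero.2 hu.ne'
  have hvne : (v:ℝ) ≠ 0 := Nat.cast_ne_zero.2 hv.ne'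
  have hmne : (m:ℝ) ≠ 0 := Nat.cast_ne_zero.2 (by omega)
  have hc1 : cfVal (2 :: Sc) = (2 * P + Q) / P := by
    rw [cfVal_eq _ hOnes2Sc, ML_cons00, ML_cons10, hsym, ← hP']
  have hc2 : cfVal (2 :: (Sc ++ [2])) = A / (2 * P + Q) := by
    rw [cfVal_eq _ hOnes2Sc2, ML_cons00, ML_cons10, e00, e10, hA']
    congr 1
    ring
  have E1 : (v:ℝ) * (2 * P + Q) = u * P := by
    rw [show cfVal ((0:ℝ) :: 2 :: Sc) = 0 + 1 / cfVal (2 :: Sc) from rfl, hc1] at h1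
    field_simp at h1
    linear_combination h1
  have E2 : (u:ℝ) * A = m * (2 * P + Q) := by
    rw [show cfVal ((0:ℝ) :: 2 :: (Sc ++ [2])) = 0 + 1 / cfVal (2 :: (Sc ++ [2])) from rfl,
      hc2] at h2
    field_simp at h2
    linear_combination h2
  have hmp : (m:ℝ) * P = v * A := by
    have h0 : (u:ℝ) * ((m:ℝ) * P - v * A) = 0 := by
      linear_combination (-(m:ℝ)) * E1 + (-(v:ℝ)) * E2
    rcases mul_eq_zero.mp h0 with h | h
    · exact absurd h hune
    · linarith
  have hx2 : A * (-β - 2) ^ 2 + B * (-β - 2) - C = 0 := by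
    have h0 : (m:ℝ) * (A * (-β - 2) ^ 2 + B * (-β - 2) - C) = 0 := by
      rw [hA', hB', hC']
      rw [hA'] at E2 hmp
      linear_combination (4 * P + 4 * Q + R) * hβ + (2 * β + 3) * E2 + hmp
    rcases mul_eq_zero.mp h0 with h | h
    · exact absurd h hmne
    · exact h
  have hx1 : A * (1 / y) ^ 2 + B * (1 / y) - C = 0 := by
    field_simp
    linear_combination (-1 : ℝ) * hy
  have hfac : (1 / y - (-β - 2)) * (A * (1 / y + (-β - 2)) + B) = 0 := by
    linear_combination hx1 - hx2
  have hx1gt : 1 / 2 < 1 / y := by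
    rw [div_lt_div_iff₀ (by norm_num) hypos]
    linarith
  rcases mul_eq_zero.mp hfac with h | h
  · linarith [sub_eq_zero.mp h]
  · exact (aux_contra A B (1 / y) (-β - 2) hApos h2B3A hx1gt (by linarith) h).elim
end

section
/- For each even integer n ≥ 2 and all real numbers x ≥ 1 and y ≥ 1: the inequality [2; 1_n, x] + [0; 2, 1_{n−2}, y] ≤ 3 holds if and only if x ≥ y, and equality [2; 1_n, x] + [0; 2, 1_{n−2}, y] = 3 holds if and only if x = y. -/
lemma fib_cassini' (m : ℕ) :
    ((Nat.fib (m+1) : ℤ) * Nat.fib (m+2) - Nat.fib m * Nat.fib (m+3)) = (-1) ^ m := by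
  induction m with
  | zero => simp
  | succ k ih =>
    have h2 : (Nat.fib (k+2) : ℤ) = Nat.fib k + Nat.fib (k+1) := by
      exact_mod_cast Nat.fib_add_two
    have h4 : (Nat.fib (k+4) : ℤ) = Nat.fib (k+2) + Nat.fib (k+3) := by
      exact_mod_cast Nat.fib_add_two (n := k+2)
    rw [pow_succ]
    linear_combination (-1) * ih + (Nat.fib (k+3) : ℤ) * h2 - (Nat.fib (k+1) : ℤ) * h4

lemma cf_den_pos (k : ℕ) (t : ℝ) (ht : 1 ≤ t) :
    0 < (Nat.fib k : ℝ) * t + Nat.fib (k+1) - Nat.fib k := by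
  have h1 : (Nat.fib k : ℝ) ≤ Nat.fib k * t :=
    le_mul_of_one_le_right (by positivity) ht
  have h2 : (1 : ℝ) ≤ Nat.fib (k+1) := by
    exact_mod_cast Nat.one_le_iff_ne_zero.mpr (Nat.fib_pos.mpr k.succ_pos).ne'
  linarith

lemma cf_num_pos (k : ℕ) (t : ℝ) (ht : 1 ≤ t) :
    0 < (Nat.fib (k+1) : ℝ) * t + Nat.fib k := by
  have h1 : (Nat.fib (k+1) : ℝ) ≤ Nat.fib (k+1) * t :=
    le_mul_of_one_le_right (by positivity) ht
  have h2 : (1 : ℝ) ≤ Nat.fib (k+1) := by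
    exact_mod_cast Nat.one_le_iff_ne_zero.mpr (Nat.fib_pos.mpr k.succ_pos).ne'
  have h3 : (0 : ℝ) ≤ Nat.fib k := by positivity
  linarith

lemma cf_rep (k : ℕ) (t : ℝ) (ht : 1 ≤ t) :
    cfVal (List.replicate k (1 : ℝ) ++ [t]) =
      ((Nat.fib (k+1) : ℝ) * t + Nat.fib k) /
        ((Nat.fib k : ℝ) * t + Nat.fib (k+1) - Nat.fib k) := by
  induction k with
  | zero => simp [cfVal]
  | succ k ih =>
    have hD := cf_den_pos k t ht
    have hN := cf_num_pos k t ht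
    have hfib : (Nat.fib (k+2) : ℝ) = Nat.fib k + Nat.fib (k+1) := by
      exact_mod_cast Nat.fib_add_two
    rw [List.replicate_succ, List.cons_append]
    show (1 : ℝ) + 1 / cfVal (List.replicate k (1 : ℝ) ++ [t]) = _
    rw [ih, hfib, one_div_div,
      show (Nat.fib (k+1) : ℝ) * t + ((Nat.fib k : ℝ) + Nat.fib (k+1)) - Nat.fib (k+1) =
        (Nat.fib (k+1) : ℝ) * t + Nat.fib k from by ring,
      eq_div_iff hN.ne', add_mul, div_mul_cancel₀ _ hN.ne']
    ring

/-- Lemma 4.1: for even `n ≥ 2` and reals `x, y ≥ 1`,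
`[2;1_n,x] + [0;2,1_{n−2},y] ≤ 3 ↔ x ≥ y`, with equality iff `x = y`. -/
theorem cf_ineq_lemma (n : ℕ) (hn : 2 ≤ n) (hne : Even n)
    (x y : ℝ) (hx : 1 ≤ x) (hy : 1 ≤ y) :
    (cfVal (2 :: (List.replicate n (1 : ℝ) ++ [x])) +
        cfVal (0 :: 2 :: (List.replicate (n - 2) (1 : ℝ) ++ [y])) ≤ 3 ↔ y ≤ x) ∧
    (cfVal (2 :: (List.replicate n (1 : ℝ) ++ [x])) +
        cfVal (0 :: 2 :: (List.replicate (n - 2) (1 : ℝ) ++ [y])) = 3 ↔ x = y) := by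
  obtain ⟨m, rfl⟩ : ∃ m, n = m + 2 := ⟨n - 2, by omega⟩
  have hm : Even m := by
    rcases hne with ⟨r, hr⟩; exact ⟨r - 1, by omega⟩
  set a : ℝ := (Nat.fib (m+1) : ℝ) with ha
  set b : ℝ := (Nat.fib m : ℝ) with hb
  set c : ℝ := (Nat.fib (m+2) : ℝ) with hc
  set d : ℝ := (Nat.fib (m+3) : ℝ) with hd
  have hfib2 : Nat.fib (m+2) = Nat.fib m + Nat.fib (m+1) := Nat.fib_add_two
  have hfib3 : Nat.fib (m+3) = Nat.fib (m+1) + Nat.fib (m+2) := Nat.fib_add_two (n := m+1)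
  have hca : c = a + b := by rw [ha, hb, hc, hfib2]; push_cast; ring
  have hdc : d = c + a := by rw [ha, hc, hd, hfib3]; push_cast; ring
  have hcass : a * c - b * d = 1 := by
    have := fib_cassini' m
    rw [hm.neg_one_pow] at this
    rw [ha, hb, hc, hd]
    exact_mod_cast this
  -- positivity facts
  have hb0 : (0 : ℝ) ≤ b := by rw [hb]; positivity
  have ha1 : (1 : ℝ) ≤ a := by
    rw [ha]; exact_mod_cast Nat.one_le_iff_ne_zero.mpr (Nat.fib_pos.mpr m.succ_pos).ne'
  have hDx : 0 < d * x + c := by nlinarith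
  have hDy : 0 < d * y + c := by nlinarith
  have hNy : 0 < a * y + b := by nlinarith
  -- first summand
  have hA : cfVal (2 :: (List.replicate (m+2) (1 : ℝ) ++ [x])) =
      3 - (a * x + b) / (d * x + c) := by
    have hrep := cf_rep (m+2) x hx
    have hDpos := cf_den_pos (m+2) x hx
    have hNpos := cf_num_pos (m+2) x hx
    show (2 : ℝ) + 1 / cfVal (List.replicate (m+2) (1 : ℝ) ++ [x]) = _
    rw [hrep, one_div_div]
    have e1 : ((Nat.fib (m+2) : ℝ) * x + Nat.fib (m+3) - Nat.fib (m+2)) = c * x + a := by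
      rw [ha, hc, hfib3]; push_cast; ring
    have e2 : ((Nat.fib (m+3) : ℝ) * x + Nat.fib (m+2)) = d * x + c := by
      rw [hc, hd]
    rw [e1, e2]
    have hone : (a * x + b) / (d * x + c) + (c * x + a) / (d * x + c) = 1 := by
      rw [← add_div,
        show a * x + b + (c * x + a) = d * x + c from by rw [hdc, hca]; ring]
      exact div_self hDx.ne'
    linarith [hone]
  -- second summand
  have hB : cfVal (0 :: 2 :: (List.replicate (m+2-2) (1 : ℝ) ++ [y])) =
      (a * y + b) / (d * y + c) := by
    have hm2 : m + 2 - 2 = m := by omega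
    rw [hm2]
    have hrep := cf_rep m y hy
    have hDpos := cf_den_pos m y hy
    have hNpos := cf_num_pos m y hy
    show (0 : ℝ) + 1 / ((2 : ℝ) + 1 / cfVal (List.replicate m (1 : ℝ) ++ [y])) = _
    rw [hrep, one_div_div]
    have e1 : ((Nat.fib m : ℝ) * y + Nat.fib (m+1) - Nat.fib m) = b * y + (a - b) := by
      rw [ha, hb]; ring
    have e2 : ((Nat.fib (m+1) : ℝ) * y + Nat.fib m) = a * y + b := by
      rw [ha, hb]
    rw [e1, e2]
    have h2 : (2 : ℝ) + (b * y + (a - b)) / (a * y + b) = (d * y + c) / (a * y + b) := by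
      rw [eq_div_iff hNy.ne', add_mul, div_mul_cancel₀ _ hNy.ne', hdc, hca]
      ring
    rw [h2, zero_add, one_div_div]
  have key : cfVal (2 :: (List.replicate (m+2) (1 : ℝ) ++ [x])) +
      cfVal (0 :: 2 :: (List.replicate (m+2-2) (1 : ℝ) ++ [y])) =
      3 + (y - x) / ((d * x + c) * (d * y + c)) := by
    rw [hA, hB]
    have e1 : (a*x+b)/(d*x+c) = (a*x+b)*(d*y+c)/((d*x+c)*(d*y+c)) := by
      rw [mul_div_mul_right _ _ hDy.ne']
    have e2 : (a*y+b)/(d*y+c) = (a*y+b)*(d*x+c)/((d*x+c)*(d*y+c)) := by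
      rw [mul_comm (d*x+c), mul_div_mul_right _ _ hDx.ne']
    have hnum : (a*y+b)*(d*x+c) - (a*x+b)*(d*y+c) = y - x := by
      linear_combination (y - x) * hcass
    rw [e1, e2, ← hnum, sub_div]
    ring
  rw [key]
  have hP : 0 < (d * x + c) * (d * y + c) := mul_pos hDx hDy
  constructor
  · constructor
    · intro h
      by_contra hxy
      push_neg at hxy
      have : 0 < (y - x) / ((d * x + c) * (d * y + c)) := div_pos (by linarith) hP
      linarith
    · intro h
      have : (y - x) / ((d * x + c) * (d * y + c)) ≤ 0 :=
        div_nonpos_of_nonpos_of_nonneg (by linarith) hP.le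
      linarith
  · constructor
    · intro h
      have h0 : (y - x) / ((d * x + c) * (d * y + c)) = 0 := by linarith
      have := (div_eq_zero_iff.mp h0).resolve_right hP.ne'
      linarith
    · rintro rfl
      simp
end

section
/- Let r(1), r(2), … be a sequence of nonnegative integers satisfying conditions (A), (B) and (C₀₁) (i.e. a sequence in M₀₁), and let A be the sequence of positive integers of form (4.1) built from r. Then μ_n(A) < 3 for all n ≥ 1. -/
open Filter List

lemma cfVal_nil : cfVal [] = 0 := rfl
lemma cfVal_cons (a : ℝ) (l : List ℝ) : cfVal (a :: l) = a + 1 / cfVal l := rfl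

lemma cfVal_nonneg (l : List ℝ) (h : ∀ a ∈ l, 0 ≤ a) : 0 ≤ cfVal l := by
  induction l with
  | nil => simp [cfVal_nil]
  | cons a t ih =>
    rw [cfVal_cons]
    have ht := ih (fun x hx => h x (List.mem_cons_of_mem _ hx))
    have := h a (List.mem_cons_self)
    positivity

lemma cfVal_ge_one (l : List ℝ) (hne : l ≠ []) (h : ∀ a ∈ l, 1 ≤ a) : 1 ≤ cfVal l := by
  cases l with
  | nil => simp at hne
  | cons a t =>
    rw [cfVal_cons]
    have h1 := h a (List.mem_cons_self)
    have h0 : 0 ≤ cfVal t := cfVal_nonneg t (fun x hx => le_trans zero_le_one (h x (List.mem_cons_of_mem _ hx)))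
    have : 0 ≤ 1 / cfVal t := by positivity
    linarith

/-- interval bounds for lists of entries in [1,2] with last in [1,3] -/
lemma cfVal_append_bounds (l : List ℝ) (hl : ∀ a ∈ l, 1 ≤ a ∧ a ≤ 2) (v : ℝ)
    (hv : 1 ≤ v ∧ v ≤ 3) :
    (1 ≤ cfVal (l ++ [v]) ∧ cfVal (l ++ [v]) ≤ 3) ∧ (l ≠ [] → 4/3 ≤ cfVal (l ++ [v])) := by
  induction l with
  | nil =>
    constructor
    · simpa [cfVal_cons, cfVal_nil] using hv
    · intro h; simp at h
  | cons a t ih =>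
    have h := (ih (fun x hx => hl x (List.mem_cons_of_mem _ hx))).1
    have ha := hl a (List.mem_cons_self)
    rw [List.cons_append, cfVal_cons]
    have hpos : (0:ℝ) < cfVal (t ++ [v]) := lt_of_lt_of_le zero_lt_one h.1
    have h13 : 1/3 ≤ 1 / cfVal (t ++ [v]) := by
      rw [div_le_div_iff₀ (by norm_num) hpos]; linarith [h.2]
    have hle1 : 1 / cfVal (t ++ [v]) ≤ 1 := by
      rw [div_le_one hpos]; exact h.1
    refine ⟨⟨by linarith [ha.1], by linarith [ha.2]⟩, fun _ => by linarith [ha.1]⟩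

lemma cfVal_diff (l : List ℝ) (hl : ∀ a ∈ l, 1 ≤ a ∧ a ≤ 2) (v w : ℝ)
    (hv : 1 ≤ v ∧ v ≤ 3) (hw : 1 ≤ w ∧ w ≤ 3) :
    |cfVal (l ++ [v]) - cfVal (l ++ [w])| ≤ (3/4) ^ l.length * (4/3) * |v - w| := by
  induction l with
  | nil =>
    simp only [List.nil_append, List.length_nil, pow_zero, one_mul, cfVal_cons, cfVal_nil,
      div_zero, add_zero]
    nlinarith [abs_nonneg (v - w)]
  | cons a t ih =>
    have h := ih (fun x hx => hl x (List.mem_cons_of_mem _ hx))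
    have hv'' := cfVal_append_bounds t (fun x hx => hl x (List.mem_cons_of_mem _ hx)) v hv
    have hw'' := cfVal_append_bounds t (fun x hx => hl x (List.mem_cons_of_mem _ hx)) w hw
    have hv' := hv''.1
    have hw' := hw''.1
    set X := cfVal (t ++ [v]) with hX
    set Y := cfVal (t ++ [w]) with hY
    rw [List.cons_append, List.cons_append, cfVal_cons, cfVal_cons, ← hX, ← hY]
    have hXpos : (0:ℝ) < X := lt_of_lt_of_le zero_lt_one hv'.1
    have hYpos : (0:ℝ) < Y := lt_of_lt_of_le zero_lt_one hw'.1
    have key : a + 1 / X - (a + 1 / Y) = (Y - X) / (X * Y) := by field_simp; ring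
    rw [key, abs_div, abs_of_pos (mul_pos hXpos hYpos)]
    rcases eq_or_ne t [] with rfl | htne
    · have hXv : X = v := by simp [hX, cfVal_cons, cfVal_nil]
      have hYw : Y = w := by simp [hY, cfVal_cons, cfVal_nil]
      have hXY : 1 ≤ X * Y := by nlinarith [hv'.1, hw'.1]
      calc |Y - X| / (X * Y) ≤ |Y - X| / 1 :=
            div_le_div_of_nonneg_left (abs_nonneg _) zero_lt_one hXY
        _ = |v - w| := by rw [div_one, abs_sub_comm, hXv, hYw]
        _ ≤ (3/4) ^ (a :: ([]:List ℝ)).length * (4/3) * |v - w| := by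
            simp only [List.length_cons, List.length_nil, zero_add, pow_one]
            nlinarith [abs_nonneg (v - w)]
    · have hX43 : (4:ℝ)/3 ≤ X := hv''.2 htne
      have hY43 : (4:ℝ)/3 ≤ Y := hw''.2 htne
      have hXY : (16:ℝ)/9 ≤ X * Y := by nlinarith
      have step1 : |Y - X| / (X * Y) ≤ (9/16) * |X - Y| := by
        rw [abs_sub_comm Y X, div_le_iff₀ (by nlinarith : (0:ℝ) < X * Y)]
        nlinarith [abs_nonneg (X - Y)]
      calc |Y - X| / (X * Y) ≤ (9/16) * |X - Y| := step1
        _ ≤ (9/16) * ((3/4) ^ t.length * (4/3) * |v - w|) := by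
            nlinarith [abs_nonneg (X - Y), abs_nonneg (v-w),
              mul_nonneg (mul_nonneg (pow_nonneg (by norm_num : (0:ℝ) ≤ 3/4) t.length) (by norm_num : (0:ℝ) ≤ 4/3)) (abs_nonneg (v-w))]
        _ ≤ (3/4) ^ (a :: t).length * (4/3) * |v - w| := by
            rw [List.length_cons, pow_succ]
            nlinarith [pow_nonneg (by norm_num : (0:ℝ) ≤ 3/4) t.length, abs_nonneg (v - w)]

def GoodF (f : ℕ → ℝ) : Prop := ∀ k, 1 ≤ f k ∧ f k ≤ 2

noncomputable def cfPart (f : ℕ → ℝ) (n : ℕ) : ℝ := cfVal ((List.range (n + 1)).map f)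

lemma cfVal_merge (l : List ℝ) (a b : ℝ) :
    cfVal (l ++ [a, b]) = cfVal (l ++ [a + 1 / b]) := by
  induction l with
  | nil => simp [cfVal_cons, cfVal_nil]
  | cons c t ih => simp [cfVal_cons, ih]

lemma cfPart_split (f : ℕ → ℝ) (n : ℕ) :
    cfPart f n = cfVal ((List.range n).map f ++ [f n]) := by
  rw [cfPart, List.range_succ, List.map_append]; rfl

lemma cfPart_bounds (f : ℕ → ℝ) (hf : GoodF f) (n : ℕ) :
    1 ≤ cfPart f n ∧ cfPart f n ≤ 3 := by
  rw [cfPart_split]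
  exact (cfVal_append_bounds _ (by intro a ha; simp at ha; obtain ⟨i, _, rfl⟩ := ha; exact hf i)
    (f n) ⟨(hf n).1, le_trans (hf n).2 (by norm_num)⟩).1

lemma cfPart_dist (f : ℕ → ℝ) (hf : GoodF f) (n : ℕ) :
    dist (cfPart f n) (cfPart f (n + 1)) ≤ (4/3) * (3/4) ^ n := by
  have h1 : cfPart f (n+1) = cfVal ((List.range n).map f ++ [f n + 1 / f (n+1)]) := by
    rw [cfPart, List.range_succ, List.range_succ, List.map_append, List.map_append]
    rw [List.append_assoc, ← cfVal_merge]
    rfl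
  rw [cfPart_split, Real.dist_eq]
  have hl : ∀ a ∈ (List.range n).map f, 1 ≤ a ∧ a ≤ 2 := by
    intro a ha; simp at ha; obtain ⟨i, _, rfl⟩ := ha; exact hf i
  have hlen : ((List.range n).map f).length = n := by simp
  have hfn1 : (0:ℝ) < f (n+1) := lt_of_lt_of_le zero_lt_one (hf (n+1)).1
  have hb : 1 ≤ f n + 1 / f (n+1) ∧ f n + 1 / f (n+1) ≤ 3 := by
    constructor
    · have : 0 ≤ 1 / f (n+1) := by positivity
      linarith [(hf n).1]
    · have : 1 / f (n+1) ≤ 1 := by rw [div_le_one hfn1]; exact (hf (n+1)).1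
      linarith [(hf n).2]
  have := cfVal_diff ((List.range n).map f) hl (f n) (f n + 1 / f (n+1))
    ⟨(hf n).1, le_trans (hf n).2 (by norm_num)⟩ hb
  rw [hlen] at this
  rw [h1]
  have habs : |f n - (f n + 1 / f (n+1))| = 1 / f (n+1) := by
    rw [show f n - (f n + 1 / f (n+1)) = -(1/f (n+1)) by ring, abs_neg,
      abs_of_pos (by positivity)]
  rw [habs] at this
  have h1le : 1 / f (n+1) ≤ 1 := by rw [div_le_one hfn1]; exact (hf (n+1)).1
  calc |cfVal ((List.range n).map f ++ [f n]) - cfVal ((List.range n).map f ++ [f n + 1 / f (n+1)])|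
      ≤ (3/4)^n * (4/3) * (1 / f (n+1)) := this
    _ ≤ (4/3) * (3/4)^n := by
        nlinarith [pow_nonneg (by norm_num : (0:ℝ) ≤ 3/4) n, one_div_pos.mpr hfn1]

lemma cfPart_tendsto (f : ℕ → ℝ) (hf : GoodF f) :
    Filter.Tendsto (cfPart f) Filter.atTop (nhds (cfInfVal f)) := by
  have hc : CauchySeq (cfPart f) :=
    cauchySeq_of_le_geometric (3/4) (4/3) (by norm_num) (cfPart_dist f hf)
  obtain ⟨L, hL⟩ := cauchySeq_tendsto_of_complete hc
  have : cfInfVal f = L := hL.limUnder_eq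
  rw [this]; exact hL

lemma cfInfVal_bounds (f : ℕ → ℝ) (hf : GoodF f) : 1 ≤ cfInfVal f ∧ cfInfVal f ≤ 3 :=
  ⟨ge_of_tendsto' (cfPart_tendsto f hf) (fun n => (cfPart_bounds f hf n).1),
   le_of_tendsto' (cfPart_tendsto f hf) (fun n => (cfPart_bounds f hf n).2)⟩

lemma cfInfVal_rec (f : ℕ → ℝ) (hf : GoodF f) :
    cfInfVal f = f 0 + 1 / cfInfVal (fun k => f (k + 1)) := by
  set g : ℕ → ℝ := fun k => f (k + 1) with hg
  have hgf : GoodF g := fun k => hf (k + 1)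
  have hgpos : (0:ℝ) < cfInfVal g := lt_of_lt_of_le zero_lt_one (cfInfVal_bounds g hgf).1
  have hrec : ∀ n, cfPart f (n + 1) = f 0 + 1 / cfPart g n := by
    intro n
    rw [cfPart, cfPart, List.range_succ_eq_map]
    simp only [List.map_cons, List.map_map]
    rfl
  have t1 : Filter.Tendsto (fun n => cfPart f (n + 1)) Filter.atTop (nhds (cfInfVal f)) :=
    (cfPart_tendsto f hf).comp (Filter.tendsto_add_atTop_nat 1)
  have t2 : Filter.Tendsto (fun n => f 0 + 1 / cfPart g n) Filter.atTop
      (nhds (f 0 + 1 / cfInfVal g)) := by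
    apply Filter.Tendsto.const_add
    exact (tendsto_const_nhds.div (cfPart_tendsto g hgf) (ne_of_gt hgpos))
  rw [show (fun n => cfPart f (n + 1)) = (fun n => f 0 + 1 / cfPart g n) from funext hrec] at t1
  exact tendsto_nhds_unique t1 t2

/-! ### Integer word layer -/

def shf (s : ℕ → ℕ) : ℕ → ℕ := fun i => s (i + 1)

def GoodW (w : ℕ → ℕ) : Prop := ∀ k, 1 ≤ w k ∧ w k ≤ 2

noncomputable def VV (w : ℕ → ℕ) : ℝ := cfInfVal (fun k => (w k : ℝ))

noncomputable def cfl (l : List ℕ) : ℝ := cfVal (l.map (Nat.cast : ℕ → ℝ))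

def GoodL (l : List ℕ) : Prop := ∀ a ∈ l, 1 ≤ a ∧ a ≤ 2

lemma goodW_goodF (w : ℕ → ℕ) (hw : GoodW w) : GoodF (fun k => (w k : ℝ)) := by
  intro k
  have h1 : (1:ℝ) ≤ (w k : ℝ) := by exact_mod_cast (hw k).1
  have h2 : (w k : ℝ) ≤ 2 := by exact_mod_cast (hw k).2
  exact ⟨h1, h2⟩

lemma VV_rec (w : ℕ → ℕ) (hw : GoodW w) : VV w = w 0 + 1 / VV (shf w) := by
  have := cfInfVal_rec (fun k => (w k : ℝ)) (goodW_goodF w hw)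
  simpa [VV, shf] using this

lemma VV_bounds (w : ℕ → ℕ) (hw : GoodW w) : 1 ≤ VV w ∧ VV w ≤ 3 :=
  cfInfVal_bounds _ (goodW_goodF w hw)

lemma shf_good (w : ℕ → ℕ) (hw : GoodW w) : GoodW (shf w) := fun k => hw (k + 1)

lemma VV_ge (w : ℕ → ℕ) (hw : GoodW w) : (w 0 : ℝ) + 1/3 ≤ VV w := by
  rw [VV_rec w hw]
  have h := VV_bounds (shf w) (shf_good w hw)
  have hpos : (0:ℝ) < VV (shf w) := lt_of_lt_of_le zero_lt_one h.1
  have : (1:ℝ)/3 ≤ 1 / VV (shf w) := by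
    rw [div_le_div_iff₀ (by norm_num) hpos]; linarith [h.2]
  linarith

lemma VV_le (w : ℕ → ℕ) (hw : GoodW w) : VV w ≤ (w 0 : ℝ) + 3/4 := by
  rw [VV_rec w hw]
  have h := VV_ge (shf w) (shf_good w hw)
  have h1 : (1:ℝ) + 1/3 ≤ VV (shf w) := by
    have := (shf_good w hw 0).1
    have : (1:ℝ) ≤ ((shf w) 0 : ℝ) := by exact_mod_cast this
    linarith
  have hpos : (0:ℝ) < VV (shf w) := by linarith
  have : 1 / VV (shf w) ≤ 3/4 := by
    rw [div_le_iff₀ hpos]; linarith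
  linarith

lemma VV_gt_head (w : ℕ → ℕ) (hw : GoodW w) : (w 0 : ℝ) < VV w := by
  rw [VV_rec w hw]
  have h := VV_bounds (shf w) (shf_good w hw)
  have hpos : (0:ℝ) < VV (shf w) := lt_of_lt_of_le zero_lt_one h.1
  have : (0:ℝ) < 1 / VV (shf w) := by positivity
  linarith

lemma VV_pos (w : ℕ → ℕ) (hw : GoodW w) : (0:ℝ) < VV w :=
  lt_of_lt_of_le zero_lt_one (VV_bounds w hw).1

lemma cfl_nil : cfl [] = 0 := rfl
lemma cfl_cons (a : ℕ) (l : List ℕ) : cfl (a :: l) = a + 1 / cfl l := rfl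

lemma cfl_nonneg (l : List ℕ) : 0 ≤ cfl l := by
  apply cfVal_nonneg
  intro x hx
  simp at hx
  obtain ⟨i, _, rfl⟩ := hx
  positivity

lemma cfl_ge_one (l : List ℕ) (hne : l ≠ []) (hl : GoodL l) : 1 ≤ cfl l := by
  apply cfVal_ge_one
  · intro h
    apply hne
    cases l with
    | nil => rfl
    | cons a t => simp at h
  · intro x hx
    simp at hx
    obtain ⟨i, hi, rfl⟩ := hx
    exact_mod_cast (hl i hi).1

lemma cfl_pos (l : List ℕ) (hne : l ≠ []) (hl : GoodL l) : 0 < cfl l :=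
  lt_of_lt_of_le zero_lt_one (cfl_ge_one l hne hl)

lemma cfl_cons_le (a : ℕ) (l : List ℕ) (hl : GoodL l) : cfl (a :: l) ≤ a + 1 := by
  rw [cfl_cons]
  rcases eq_or_ne l [] with rfl | hne
  · simp [cfl_nil]
  · have h1 := cfl_ge_one l hne hl
    have : 1 / cfl l ≤ 1 := by rw [div_le_one (by linarith)]; exact h1
    linarith

lemma cfl_cons_ge (a : ℕ) (l : List ℕ) : (a:ℝ) ≤ cfl (a :: l) := by
  rw [cfl_cons]
  have := cfl_nonneg l
  have : 0 ≤ 1 / cfl l := by positivity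
  linarith

/-- flip: for positive p q, a + 1/p < a + 1/q ↔ q < p -/
lemma flip_lt {p q : ℝ} (hp : 0 < p) (hq : 0 < q) (a : ℝ) :
    a + 1/p < a + 1/q ↔ q < p := by
  rw [add_lt_add_iff_left, div_lt_div_iff₀ hp hq, one_mul, one_mul]

/-! ### words built with fcons / fapp -/

def fcons (a : ℕ) (w : ℕ → ℕ) : ℕ → ℕ := fun k => match k with | 0 => a | k+1 => w k

def fapp : List ℕ → (ℕ → ℕ) → (ℕ → ℕ)
  | [], w => w
  | a :: l, w => fcons a (fapp l w)

@[simp] lemma fcons_zero (a : ℕ) (w : ℕ → ℕ) : fcons a w 0 = a := rfl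
@[simp] lemma fcons_succ (a : ℕ) (w : ℕ → ℕ) (k : ℕ) : fcons a w (k+1) = w k := rfl
@[simp] lemma shf_fcons (a : ℕ) (w : ℕ → ℕ) : shf (fcons a w) = w := rfl

lemma fcons_good (a : ℕ) (w : ℕ → ℕ) (ha : 1 ≤ a ∧ a ≤ 2) (hw : GoodW w) :
    GoodW (fcons a w) := by
  intro k
  cases k with
  | zero => exact ha
  | succ k => exact hw k

lemma fapp_good (l : List ℕ) (w : ℕ → ℕ) (hl : GoodL l) (hw : GoodW w) :
    GoodW (fapp l w) := by
  induction l with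
  | nil => exact hw
  | cons a t ih =>
    exact fcons_good a _ (hl a (List.mem_cons_self))
      (ih (fun x hx => hl x (List.mem_cons_of_mem _ hx)))

lemma fapp_append (l1 l2 : List ℕ) (w : ℕ → ℕ) :
    fapp (l1 ++ l2) w = fapp l1 (fapp l2 w) := by
  induction l1 with
  | nil => rfl
  | cons a t ih => simp [fapp, ih]

lemma VV_fcons (a : ℕ) (w : ℕ → ℕ) (ha : 1 ≤ a ∧ a ≤ 2) (hw : GoodW w) :
    VV (fcons a w) = a + 1 / VV w := by
  rw [VV_rec _ (fcons_good a w ha hw), fcons_zero, shf_fcons]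

lemma goodL_replicate (m a : ℕ) (ha : 1 ≤ a ∧ a ≤ 2) : GoodL (List.replicate m a) := by
  intro x hx
  rw [List.eq_of_mem_replicate hx]
  exact ha

lemma goodL_append {l1 l2 : List ℕ} (h1 : GoodL l1) (h2 : GoodL l2) : GoodL (l1 ++ l2) := by
  intro x hx
  rcases List.mem_append.mp hx with h | h
  · exact h1 x h
  · exact h2 x h

lemma goodL_cons {a : ℕ} {l : List ℕ} (ha : 1 ≤ a ∧ a ≤ 2) (hl : GoodL l) : GoodL (a :: l) := by
  intro x hx
  rcases List.mem_cons.mp hx with rfl | h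
  · exact ha
  · exact hl x h

lemma goodL_tail {a : ℕ} {l : List ℕ} (h : GoodL (a :: l)) : GoodL l :=
  fun x hx => h x (List.mem_cons_of_mem _ hx)

/-- peel one equal entry: GT version -/
lemma peel1_gt (a : ℕ) (ha : 1 ≤ a ∧ a ≤ 2) (w : ℕ → ℕ) (hw : GoodW w) (y : List ℕ)
    (hy : 0 < cfl y) :
    cfl (a :: y) < VV (fcons a w) ↔ VV w < cfl y := by
  rw [VV_fcons a w ha hw, cfl_cons]
  exact flip_lt hy (VV_pos w hw) a

lemma peel1_lt (a : ℕ) (ha : 1 ≤ a ∧ a ≤ 2) (w : ℕ → ℕ) (hw : GoodW w) (y : List ℕ)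
    (hy : 0 < cfl y) :
    VV (fcons a w) < cfl (a :: y) ↔ cfl y < VV w := by
  rw [VV_fcons a w ha hw, cfl_cons]
  exact flip_lt (VV_pos w hw) hy a

lemma peel_ones2 (b : ℕ) (w : ℕ → ℕ) (hw : GoodW w) (y : List ℕ) (hy : y ≠ [])
    (hyg : GoodL y) :
    (cfl (List.replicate (2*b) 1 ++ y) < VV (fapp (List.replicate (2*b) 1) w) ↔
      cfl y < VV w) ∧
    (VV (fapp (List.replicate (2*b) 1) w) < cfl (List.replicate (2*b) 1 ++ y) ↔
      VV w < cfl y) := by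
  induction b generalizing w with
  | zero => simp [fapp]
  | succ b ih =>
    have h2b : 2 * (b+1) = (2*b) + 1 + 1 := by ring
    rw [h2b, List.replicate_succ, List.replicate_succ]
    have hgw' : GoodW (fapp (List.replicate (2*b) 1) w) :=
      fapp_good _ w (goodL_replicate _ 1 (by norm_num)) hw
    have hgw'' : GoodW (fcons 1 (fapp (List.replicate (2*b) 1) w)) :=
      fcons_good 1 _ (by norm_num) hgw'
    have hy1 : 0 < cfl (List.replicate (2*b) 1 ++ y) := by
      apply cfl_pos
      · simp [hy]
      · exact goodL_append (goodL_replicate _ 1 (by norm_num)) hyg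
    have hy2 : 0 < cfl (1 :: (List.replicate (2*b) 1 ++ y)) := by
      exact cfl_pos _ (by simp)
        (goodL_cons (by norm_num) (goodL_append (goodL_replicate _ 1 (by norm_num)) hyg))
    have e1 : fapp (1 :: 1 :: List.replicate (2*b) 1) w
        = fcons 1 (fcons 1 (fapp (List.replicate (2*b) 1) w)) := rfl
    have e2 : (1 :: 1 :: List.replicate (2*b) 1) ++ y
        = 1 :: (1 :: (List.replicate (2*b) 1 ++ y)) := by simp
    rw [e1, e2]
    constructor
    · rw [peel1_gt 1 (by norm_num) _ hgw'' _ hy2, peel1_lt 1 (by norm_num) _ hgw' _ hy1]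
      exact (ih w hw).1
    · rw [peel1_lt 1 (by norm_num) _ hgw'' _ hy2, peel1_gt 1 (by norm_num) _ hgw' _ hy1]
      exact (ih w hw).2

/-! ### form41 structure -/

lemma form41_lt (s : ℕ → ℕ) (n : ℕ) (h : n < 2 * s 0 + 2) :
    form41 s n = if n = 0 then 2 else if n ≤ 2 * s 0 then 1 else 2 := by
  rw [form41]; simp [h]

lemma form41_shift (s : ℕ → ℕ) (m : ℕ) :
    form41 s (2 * s 0 + 2 + m) = form41 (shf s) m := by
  rw [form41, dif_neg (by omega)]
  congr 1
  omega

lemma form41_good (s : ℕ → ℕ) : GoodW (form41 s) := by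
  intro n
  induction n using Nat.strong_induction_on generalizing s with
  | _ n ih =>
    by_cases h : n < 2 * s 0 + 2
    · rw [form41_lt s n h]
      split <;> [norm_num; skip]
      split <;> norm_num
    · push_neg at h
      have : n = 2 * s 0 + 2 + (n - (2 * s 0 + 2)) := by omega
      rw [this, form41_shift]
      exact ih _ (by omega) (shf s)

def IW (s : ℕ → ℕ) : ℕ → ℕ := fun k => form41 s (k + 1)

lemma IW_good (s : ℕ → ℕ) : GoodW (IW s) := fun k => form41_good s (k + 1)

lemma fapp_rep_lt (a : ℕ) (w : ℕ → ℕ) : ∀ m k, k < m → fapp (List.replicate m a) w k = a := by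
  intro m
  induction m with
  | zero => omega
  | succ m ih =>
    intro k hk
    rw [List.replicate_succ]
    cases k with
    | zero => rfl
    | succ k => exact ih k (by omega)

lemma fapp_rep_ge (a : ℕ) (w : ℕ → ℕ) : ∀ m j, fapp (List.replicate m a) w (m + j) = w j := by
  intro m
  induction m with
  | zero => intro j; show w (0 + j) = w j; rw [Nat.zero_add]
  | succ m ih =>
    intro j
    rw [List.replicate_succ]
    have : m + 1 + j = (m + j) + 1 := by omega
    rw [this]
    show fapp (List.replicate m a) w (m + j) = w j
    exact ih j

lemma IW_unfold (s : ℕ → ℕ) :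
    IW s = fapp (List.replicate (2 * s 0) 1) (fcons 2 (fcons 2 (IW (shf s)))) := by
  funext k
  rcases lt_trichotomy k (2 * s 0) with hk | hk | hk
  · rw [fapp_rep_lt 1 _ _ _ hk, IW, form41_lt s _ (by omega)]
    simp only [Nat.succ_ne_zero, if_false]
    rw [if_pos (by omega)]
  · subst hk
    have := fapp_rep_ge 1 (fcons 2 (fcons 2 (IW (shf s)))) (2 * s 0) 0
    rw [show 2 * s 0 + 0 = 2 * s 0 by omega] at this
    rw [this, IW, form41_lt s _ (by omega)]
    simp only [fcons_zero]
    rw [if_neg (by omega), if_neg (by omega)]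
  · rcases Nat.exists_eq_add_of_lt hk with ⟨j, rfl⟩
    rw [show 2 * s 0 + j + 1 = 2 * s 0 + (j + 1) by omega, fapp_rep_ge]
    cases j with
    | zero =>
      show form41 s (2 * s 0 + 1 + 1) = 2
      rw [show 2 * s 0 + 1 + 1 = 2 * s 0 + 2 + 0 by omega, form41_shift,
        form41_lt _ _ (by omega)]
      rfl
    | succ j =>
      show form41 s (2 * s 0 + (j+1) + 1 + 1) = IW (shf s) j
      rw [show 2 * s 0 + (j+1) + 1 + 1 = 2 * s 0 + 2 + (j + 1) by omega, form41_shift]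
      rfl

/-! ### the finite word fw and predicates -/

def fw : List ℕ → List ℕ
  | [] => []
  | [b] => List.replicate (2*b) 1 ++ [2]
  | b :: c :: t => List.replicate (2*b) 1 ++ 2 :: 2 :: fw (c :: t)

lemma fw_good : ∀ l, GoodL (fw l)
  | [] => by intro x hx; simp [fw] at hx
  | [b] => by
      intro x hx
      simp only [fw] at hx
      rcases List.mem_append.mp hx with h | h
      · rw [List.eq_of_mem_replicate h]; norm_num
      · simp at h; omega
  | b :: c :: t => by
      intro x hx
      simp only [fw] at hx
      rcases List.mem_append.mp hx with h | h
      · rw [List.eq_of_mem_replicate h]; norm_num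
      · rcases List.mem_cons.mp h with rfl | h
        · norm_num
        · rcases List.mem_cons.mp h with rfl | h
          · norm_num
          · exact fw_good (c :: t) x h

lemma fw_ne_nil (b : ℕ) (l : List ℕ) : fw (b :: l) ≠ [] := by
  cases l with
  | nil => simp [fw]
  | cons c t => simp [fw]

def GoodGT : (ℕ → ℕ) → List ℕ → Prop
  | _, [] => True
  | s, b :: l => s 0 ≤ b ∧ (s 0 = b → GoodGT (shf s) l)

def GoodLT : (ℕ → ℕ) → List ℕ → Prop
  | _, [] => False
  | s, b :: l => b < s 0 ∨ (s 0 = b ∧ GoodLT (shf s) l)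

lemma cfl_fw_pos (b : ℕ) (l : List ℕ) : 0 < cfl (fw (b :: l)) :=
  cfl_pos _ (fw_ne_nil b l) (fw_good _)

lemma cfl_fw_ge_one (b : ℕ) (l : List ℕ) : 1 ≤ cfl (fw (b :: l)) :=
  cfl_ge_one _ (fw_ne_nil b l) (fw_good _)

theorem MasterGT : ∀ (l : List ℕ) (s : ℕ → ℕ), GoodGT s l → cfl (fw l) < VV (IW s) := by
  intro l
  induction l with
  | nil => intro s _; exact lt_of_lt_of_le (by norm_num [fw, cfl_nil]) (VV_bounds _ (IW_good s)).1
  | cons b l' ih =>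
    intro s hgt
    obtain ⟨hle, hrec⟩ := hgt
    set X : ℕ → ℕ := fcons 2 (fcons 2 (IW (shf s))) with hX
    have hXg : GoodW X := fcons_good 2 _ (by norm_num) (fcons_good 2 _ (by norm_num) (IW_good _))
    have hVX : (2:ℝ) + 1/3 ≤ VV X := by
      have := VV_ge X hXg
      simpa [hX] using this
    obtain ⟨R, hfwR, R', hR2, hRg⟩ :
        ∃ R, fw (b :: l') = List.replicate (2*b) 1 ++ R ∧ ∃ R', R = 2 :: R' ∧ GoodL R := by
      cases l' with
      | nil => exact ⟨[2], rfl, [], rfl, by intro x hx; simp at hx; omega⟩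
      | cons c t =>
        refine ⟨2 :: 2 :: fw (c :: t), rfl, 2 :: fw (c :: t), rfl, ?_⟩
        exact goodL_cons (by norm_num) (goodL_cons (by norm_num) (fw_good _))
    rw [IW_unfold s, hfwR]
    rcases Nat.lt_or_ge (s 0) b with hlt | hge
    · -- s 0 < b : win at the ones
      have hsplit : List.replicate (2*b) 1 = List.replicate (2 * s 0) 1 ++ List.replicate (2*(b - s 0)) 1 := by
        rw [← List.replicate_add]; congr 1; omega
      rw [hsplit, List.append_assoc]
      have hyne : List.replicate (2*(b - s 0)) 1 ++ R ≠ [] := by simp [hR2]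
      have hyg : GoodL (List.replicate (2*(b - s 0)) 1 ++ R) :=
        goodL_append (goodL_replicate _ 1 (by norm_num)) hRg
      rw [(peel_ones2 (s 0) X hXg _ hyne hyg).1]
      -- now: cfl (1 :: ...) ≤ 2 < VV X
      have hones : List.replicate (2*(b - s 0)) 1 ++ R
          = 1 :: (List.replicate (2*(b - s 0) - 1) 1 ++ R) := by
        rw [show 2*(b - s 0) = (2*(b - s 0) - 1) + 1 by omega, List.replicate_succ]
        simp
      rw [hones]
      have := cfl_cons_le 1 (List.replicate (2*(b - s 0) - 1) 1 ++ R)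
        (goodL_append (goodL_replicate _ 1 (by norm_num)) hRg)
      push_cast at this ⊢
      linarith
    · -- s 0 = b
      have heq : s 0 = b := le_antisymm hle hge
      have hRne : R ≠ [] := by simp [hR2]
      rw [← heq, (peel_ones2 (s 0) X hXg R hRne hRg).1]
      cases l' with
      | nil =>
        have hReq : R = [2] := by
          have : List.replicate (2*b) 1 ++ R = List.replicate (2*b) 1 ++ [2] := by
            rw [← hfwR]; rfl
          exact List.append_cancel_left this
        rw [hReq]
        have h2 : cfl [2] = 2 := by
          rw [cfl_cons]; norm_num [cfl_nil]
        rw [h2]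
        have := VV_gt_head X hXg
        simpa [hX] using this
      | cons c t =>
        have hReq : R = 2 :: 2 :: fw (c :: t) := by
          have : List.replicate (2*b) 1 ++ R = List.replicate (2*b) 1 ++ (2 :: 2 :: fw (c :: t)) := by
            rw [← hfwR]; rfl
          exact List.append_cancel_left this
        rw [hReq, hX]
        have hIWg : GoodW (IW (shf s)) := IW_good _
        have hfg : GoodW (fcons 2 (IW (shf s))) := fcons_good 2 _ (by norm_num) hIWg
        have hp1 : 0 < cfl (2 :: fw (c :: t)) :=
          cfl_pos _ (by simp) (goodL_cons (by norm_num) (fw_good _))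
        have hp2 : 0 < cfl (fw (c :: t)) := cfl_fw_pos c t
        rw [peel1_gt 2 (by norm_num) _ hfg _ hp1, peel1_lt 2 (by norm_num) _ hIWg _ hp2]
        exact ih (shf s) (hrec heq)

theorem MasterLT : ∀ (l : List ℕ) (s : ℕ → ℕ), GoodLT s l → VV (IW s) < cfl (fw l) := by
  intro l
  induction l with
  | nil => intro s h; exact absurd h (by simp [GoodLT])
  | cons b l' ih =>
    intro s hlt
    set X : ℕ → ℕ := fcons 2 (fcons 2 (IW (shf s))) with hX
    have hXg : GoodW X := fcons_good 2 _ (by norm_num) (fcons_good 2 _ (by norm_num) (IW_good _))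
    obtain ⟨R, hfwR, R', hR2, hRg⟩ :
        ∃ R, fw (b :: l') = List.replicate (2*b) 1 ++ R ∧ ∃ R', R = 2 :: R' ∧ GoodL R := by
      cases l' with
      | nil => exact ⟨[2], rfl, [], rfl, by intro x hx; simp at hx; omega⟩
      | cons c t =>
        refine ⟨2 :: 2 :: fw (c :: t), rfl, 2 :: fw (c :: t), rfl, ?_⟩
        exact goodL_cons (by norm_num) (goodL_cons (by norm_num) (fw_good _))
    rw [IW_unfold s, hfwR]
    rcases hlt with hbs | ⟨heq, hrec⟩
    · -- b < s 0 : list loses at the ones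
      have hsplit : List.replicate (2 * s 0) 1 = List.replicate (2*b) 1 ++ List.replicate (2*(s 0 - b)) 1 := by
        rw [← List.replicate_add]; congr 1; omega
      rw [hsplit, fapp_append]
      set Y : ℕ → ℕ := fapp (List.replicate (2*(s 0 - b)) 1) X with hY
      have hYg : GoodW Y := fapp_good _ X (goodL_replicate _ 1 (by norm_num)) hXg
      have hRne : R ≠ [] := by simp [hR2]
      rw [(peel_ones2 b Y hYg R hRne hRg).2]
      -- VV Y ≤ 7/4 < 2 ≤ cfl R
      have hY1 : Y 0 = 1 := by
        rw [hY]; exact fapp_rep_lt 1 X (2*(s 0 - b)) 0 (by omega)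
      have h1 : VV Y ≤ 1 + 3/4 := by
        have := VV_le Y hYg
        rw [hY1] at this; push_cast at this; linarith
      have h2 : (2:ℝ) ≤ cfl R := by
        rw [hR2]
        have := cfl_cons_ge 2 R'
        push_cast at this; linarith
      linarith
    · -- equal head
      cases l' with
      | nil => exact absurd hrec (by simp [GoodLT])
      | cons c t =>
        have hRne : R ≠ [] := by simp [hR2]
        rw [heq, (peel_ones2 b X hXg R hRne hRg).2]
        have hReq : R = 2 :: 2 :: fw (c :: t) := by
          have : List.replicate (2*b) 1 ++ R = List.replicate (2*b) 1 ++ (2 :: 2 :: fw (c :: t)) := by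
            rw [← hfwR]; rfl
          exact List.append_cancel_left this
        rw [hReq, hX]
        have hIWg : GoodW (IW (shf s)) := IW_good _
        have hfg : GoodW (fcons 2 (IW (shf s))) := fcons_good 2 _ (by norm_num) hIWg
        have hp1 : 0 < cfl (2 :: fw (c :: t)) :=
          cfl_pos _ (by simp) (goodL_cons (by norm_num) (fw_good _))
        have hp2 : 0 < cfl (fw (c :: t)) := cfl_fw_pos c t
        rw [peel1_lt 2 (by norm_num) _ hfg _ hp1, peel1_gt 2 (by norm_num) _ hIWg _ hp2]
        exact ih (shf s) hrec

/-! ### predicate builders -/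

lemma goodGT_build : ∀ (m : ℕ) (u v : ℕ → ℕ),
    (∀ j, j < m → (∀ k, k < j → u k = v k) → u j ≤ v j) →
    GoodGT u ((List.range m).map v) := by
  intro m
  induction m with
  | zero => intro u v _; trivial
  | succ m ih =>
    intro u v h
    rw [List.range_succ_eq_map, List.map_cons, List.map_map]
    refine ⟨h 0 (by omega) (by omega), fun heq => ?_⟩
    have := ih (shf u) (fun j => v (j + 1)) (fun j hj hpre => by
      apply h (j+1) (by omega)
      intro k hk
      cases k with
      | zero => exact heq
      | succ k => exact hpre k (by omega))
    convert this using 2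
    rfl

lemma goodLT_build : ∀ (m : ℕ) (u v : ℕ → ℕ) (j : ℕ), j < m →
    (∀ k, k < j → u k = v k) → v j < u j →
    GoodLT u ((List.range m).map v) := by
  intro m
  induction m with
  | zero => omega
  | succ m ih =>
    intro u v j hj hpre hdiff
    rw [List.range_succ_eq_map, List.map_cons, List.map_map]
    cases j with
    | zero => exact Or.inl hdiff
    | succ j =>
      refine Or.inr ⟨hpre 0 (by omega), ?_⟩
      have := ih (shf u) (fun k => v (k + 1)) j (by omega)
        (fun k hk => hpre (k+1) (by omega)) hdiff
      convert this using 2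
      rfl

lemma rev_map_range (m : ℕ) (v : ℕ → ℕ) :
    ((List.range m).map v).reverse = (List.range m).map (fun j => v (m - 1 - j)) := by
  apply List.ext_getElem
  · simp
  · intro i h1 h2
    simp only [List.getElem_reverse, List.getElem_map, List.getElem_range, List.length_reverse,
      List.length_map, List.length_range] at *

/-! ### offsets and prefixes -/

def off (s : ℕ → ℕ) : ℕ → ℕ
  | 0 => 0
  | i + 1 => 2 * s 0 + 2 + off (shf s) i

def shfIt (s : ℕ → ℕ) (i : ℕ) : ℕ → ℕ := fun k => s (i + k)

lemma shfIt_zero (s : ℕ → ℕ) : shfIt s 0 = s := funext fun k => by simp [shfIt]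

lemma shfIt_shf (s : ℕ → ℕ) (i : ℕ) : shfIt (shf s) i = shfIt s (i + 1) := by
  funext k; simp [shfIt, shf]; congr 1; omega

lemma shf_shfIt (s : ℕ → ℕ) (i : ℕ) : shf (shfIt s i) = shfIt s (i + 1) := by
  funext k; simp [shfIt, shf]; congr 1; omega

lemma form41_off : ∀ (i : ℕ) (s : ℕ → ℕ) (m : ℕ),
    form41 s (off s i + m) = form41 (shfIt s i) m := by
  intro i
  induction i with
  | zero => intro s m; rw [shfIt_zero]; simp [off]
  | succ i ih =>
    intro s m
    have : off s (i+1) + m = 2 * s 0 + 2 + (off (shf s) i + m) := by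
      simp [off]; omega
    rw [this, form41_shift, ih, shfIt_shf]

lemma off_succ' (s : ℕ → ℕ) : ∀ i, off s (i + 1) = off s i + (2 * s i + 2) := by
  intro i
  induction i generalizing s with
  | zero => simp [off, shf]
  | succ i ih =>
    show 2 * s 0 + 2 + off (shf s) (i+1) = 2 * s 0 + 2 + off (shf s) i + (2 * s (i+1) + 2)
    rw [ih (shf s)]
    simp [shf]
    omega

lemma exists_block (s : ℕ → ℕ) (n : ℕ) : ∃ i m, n = off s i + m ∧ m < 2 * s i + 2 := by
  induction n with
  | zero => exact ⟨0, 0, by simp [off], by omega⟩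
  | succ n ih =>
    obtain ⟨i, m, hn, hm⟩ := ih
    rcases Nat.lt_or_ge (m + 1) (2 * s i + 2) with h | h
    · exact ⟨i, m + 1, by omega, h⟩
    · refine ⟨i + 1, 0, ?_, by omega⟩
      rw [off_succ']
      omega

def chunksOf : List ℕ → List ℕ
  | [] => []
  | b :: l => (2 :: (List.replicate (2*b) 1 ++ [2])) ++ chunksOf l

lemma ones_map (b : ℕ) (g : ℕ → ℕ) (h0 : g 0 = 2) (h1 : ∀ m, 1 ≤ m → m ≤ 2*b → g m = 1) :
    (List.range (2*b+1)).map g = 2 :: List.replicate (2*b) 1 := by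
  rw [List.range_succ_eq_map, List.map_cons, List.map_map, h0]
  congr 1
  apply List.eq_replicate_iff.mpr
  constructor
  · simp
  · intro x hx
    simp only [List.mem_map, List.mem_range, Function.comp] at hx
    obtain ⟨m, hm, rfl⟩ := hx
    exact h1 (m + 1) (by omega) (by omega)

lemma chunk_map (b : ℕ) (g : ℕ → ℕ) (h0 : g 0 = 2) (h1 : ∀ m, 1 ≤ m → m ≤ 2*b → g m = 1)
    (h2 : g (2*b+1) = 2) :
    (List.range (2*b+2)).map g = 2 :: (List.replicate (2*b) 1 ++ [2]) := by
  rw [show 2*b+2 = (2*b+1)+1 by omega, List.range_succ, List.map_append,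
    ones_map b g h0 h1, List.map_singleton, h2]
  simp

lemma prefix_chunks : ∀ (i : ℕ) (s : ℕ → ℕ),
    (List.range (off s i)).map (form41 s) = chunksOf ((List.range i).map s) := by
  intro i
  induction i with
  | zero => simp [off, chunksOf]
  | succ i ih =>
    intro s
    have hoff : off s (i+1) = (2 * s 0 + 2) + off (shf s) i := rfl
    rw [hoff, List.range_add, List.map_append, List.map_map]
    have hfirst : (List.range (2 * s 0 + 2)).map (form41 s)
        = 2 :: (List.replicate (2 * s 0) 1 ++ [2]) := by
      apply chunk_map
      · rw [form41_lt s 0 (by omega)]; rfl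
      · intro m hm1 hm2
        rw [form41_lt s m (by omega)]
        rw [if_neg (by omega), if_pos (by omega)]
      · rw [form41_lt s _ (by omega), if_neg (by omega), if_neg (by omega)]
    have hsecond : (List.range (off (shf s) i)).map (form41 s ∘ (fun x => 2 * s 0 + 2 + x))
        = chunksOf ((List.range i).map (shf s)) := by
      rw [← ih (shf s)]
      apply List.map_congr_left
      intro m _
      exact form41_shift s m
    rw [hfirst, hsecond, List.range_succ_eq_map, List.map_cons, List.map_map]
    rfl

lemma chunksOf_append (l1 l2 : List ℕ) : chunksOf (l1 ++ l2) = chunksOf l1 ++ chunksOf l2 := by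
  induction l1 with
  | nil => rfl
  | cons b t ih => simp [chunksOf, ih]

lemma chunk_palindrome (b : ℕ) : (2 :: (List.replicate (2*b) 1 ++ [2])).reverse
    = 2 :: (List.replicate (2*b) 1 ++ [2]) := by
  simp [List.reverse_cons, List.reverse_append, List.reverse_replicate]

lemma chunksOf_reverse : ∀ l : List ℕ, (chunksOf l).reverse = chunksOf l.reverse := by
  intro l
  induction l with
  | nil => rfl
  | cons b t ih =>
    rw [show chunksOf (b :: t) = (2 :: (List.replicate (2*b) 1 ++ [2])) ++ chunksOf t from rfl,
      List.reverse_append, ih, chunk_palindrome, List.reverse_cons, chunksOf_append]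
    simp [chunksOf]

lemma chunksOf_eq_fw : ∀ (l : List ℕ), l ≠ [] → chunksOf l = 2 :: fw l
  | [], h => absurd rfl h
  | [b], _ => by simp [chunksOf, fw]
  | b :: c :: t, _ => by
    rw [show chunksOf (b :: c :: t) = (2 :: (List.replicate (2*b) 1 ++ [2])) ++ chunksOf (c :: t) from rfl,
      chunksOf_eq_fw (c :: t) (by simp)]
    show 2 :: ((List.replicate (2*b) 1 ++ [2]) ++ (2 :: fw (c :: t))) = 2 :: fw (b :: c :: t)
    rw [show fw (b :: c :: t) = List.replicate (2*b) 1 ++ 2 :: 2 :: fw (c :: t) from rfl]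
    simp

lemma fw_succ_head (c : ℕ) (t : List ℕ) : fw ((c+1) :: t) = 1 :: 1 :: fw (c :: t) := by
  have hrep : List.replicate (2*(c+1)) 1 = 1 :: 1 :: List.replicate (2*c) (1:ℕ) := by
    rw [show 2*(c+1) = (2*c + 1) + 1 by omega, List.replicate_succ, List.replicate_succ]
  cases t with
  | nil => simp [fw, hrep]
  | cons d t' => simp [fw, hrep]

/-! ### numeric lemmas -/

lemma num0 (p t : ℝ) (hp : 2 ≤ p) (ht : 2 + 1/3 ≤ t) : 1/p + 2 + 1/t < 3 := by
  have h1 : 1/p ≤ 1/2 := by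
    rw [div_le_div_iff₀ (by linarith) (by norm_num)]; linarith
  have h2 : 1/t ≤ 3/7 := by
    rw [div_le_div_iff₀ (by linarith) (by norm_num)]; linarith
  linarith

lemma num1 (q t : ℝ) (hq : 1 ≤ q) (ht : 1 + 1/(1 + 1/q) < t) : 1/(2 + 1/q) + 1/t < 1 := by
  have hq0 : 0 < q := by linarith
  have h1q : 0 < 1 + 1/q := by positivity
  have he : 1 + 1/(1 + 1/q) = (2*q+1)/(q+1) := by
    field_simp
    ring
  have ht' : (2*q+1)/(q+1) < t := he ▸ ht
  have hqpos : (0:ℝ) < (2*q+1)/(q+1) := by positivity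
  have ht0 : 0 < t := lt_trans hqpos ht'
  have h2 : 1/t < (q+1)/(2*q+1) := by
    rw [div_lt_div_iff₀ ht0 (by positivity)]
    rw [div_lt_iff₀ (by positivity)] at ht'
    linarith
  have h3 : 1/(2 + 1/q) = q/(2*q+1) := by
    rw [show 2 + 1/q = (2*q+1)/q by field_simp, one_div_div]
  rw [h3]
  have : q/(2*q+1) + (q+1)/(2*q+1) = 1 := by
    rw [← add_div]
    field_simp
    ring
  linarith

lemma num2 (q u : ℝ) (hq : 1 ≤ q) (hu : 0 < u) (huq : u < q) :
    1/(1 + 1/(1 + 1/q)) + 1/(2 + 1/u) < 1 := by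
  have hq0 : 0 < q := by linarith
  have he : 1 + 1/(1 + 1/q) = (2*q+1)/(q+1) := by field_simp; ring
  have h1 : 1/(1 + 1/(1 + 1/q)) = (q+1)/(2*q+1) := by
    rw [he, one_div_div]
  have h2 : 1/(2 + 1/u) = u/(2*u+1) := by
    rw [show 2 + 1/u = (2*u+1)/u by field_simp, one_div_div]
  rw [h1, h2]
  have h3 : u/(2*u+1) < q/(2*q+1) := by
    rw [div_lt_div_iff₀ (by positivity) (by positivity)]
    nlinarith
  have h4 : (q+1)/(2*q+1) + q/(2*q+1) = 1 := by
    rw [← add_div]; field_simp; ring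
  linarith

/-! ### assembly -/

lemma condA_bounds (r : ℕ → ℕ) (hA : CondA r) (i : ℕ) :
    r (i+1) ≤ r i + 1 ∧ r i ≤ r (i+1) + 1 := by
  have := hA i
  rw [abs_le] at this
  omega

lemma mu_eq (r : ℕ → ℕ) (n : ℕ) :
    mu (form41 r) n = 1 / cfl (((List.range n).map (form41 r)).reverse)
      + VV (fun k => form41 r (n + k)) := by
  have hmap : (List.range n).reverse.map (fun i => ((form41 r) i : ℝ))
      = (((List.range n).map (form41 r)).reverse).map (fun a : ℕ => (a : ℝ)) := by
    rw [List.map_reverse, List.map_reverse, List.map_map]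
    rfl
  rw [mu, cfVal_cons, zero_add, hmap]
  simp only [cfl, VV]

lemma prefix_goodL (r : ℕ → ℕ) (n : ℕ) : GoodL (((List.range n).map (form41 r)).reverse) := by
  intro x hx
  rw [List.mem_reverse] at hx
  obtain ⟨i, _, rfl⟩ := List.mem_map.mp hx
  exact form41_good r i

lemma VV_form41 (s : ℕ → ℕ) : VV (form41 s) = 2 + 1 / VV (IW s) := by
  have h0 : form41 s 0 = 2 := by rw [form41_lt s 0 (by omega)]; simp
  have h := VV_rec (form41 s) (form41_good s)
  have hshf : shf (form41 s) = IW s := rfl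
  rw [h0, hshf] at h
  rw [h]
  norm_num

lemma shfIt_head (r : ℕ → ℕ) (i : ℕ) : shfIt r i 0 = r i := by simp [shfIt]

lemma tail_eq_form41 (r : ℕ → ℕ) (i : ℕ) (n : ℕ) (hn : n = off r i) :
    (fun k => form41 r (n + k)) = form41 (shfIt r i) := by
  funext k
  rw [hn, form41_off]

/-- middle case : A n = 1 -/
lemma case_middle (r : ℕ → ℕ) (i m n : ℕ) (hm1 : 1 ≤ m) (hm2 : m ≤ 2 * r i)
    (hn : n = off r i + m) : mu (form41 r) n < 3 := by
  rw [mu_eq]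
  set w : ℕ → ℕ := fun k => form41 r (n + k) with hw
  have hwg : GoodW w := fun k => form41_good r (n + k)
  have hw0 : w 0 = 1 := by
    rw [hw]
    show form41 r (n + 0) = 1
    rw [Nat.add_zero, hn, form41_off, form41_lt _ _ (by rw [shfIt_head]; omega)]
    rw [if_neg (by omega), if_pos (by rw [shfIt_head]; omega)]
  have h1 : VV w ≤ 1 + 3/4 := by
    have := VV_le w hwg
    rw [hw0] at this
    push_cast at this
    linarith
  have hne : ((List.range n).map (form41 r)).reverse ≠ [] := by
    simp only [ne_eq, List.reverse_eq_nil_iff, List.map_eq_nil_iff, List.range_eq_nil]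
    omega
  have hp : 1 ≤ cfl (((List.range n).map (form41 r)).reverse) :=
    cfl_ge_one _ hne (prefix_goodL r n)
  have : 1 / cfl (((List.range n).map (form41 r)).reverse) ≤ 1 := by
    rw [div_le_one (by linarith)]; linarith
  linarith

/-- the reversed list of r-values -/
lemma lrev_cons (r : ℕ → ℕ) (i : ℕ) :
    ((List.range (i+1)).map r).reverse = r i :: ((List.range i).map r).reverse := by
  rw [List.range_succ, List.map_append]
  simp

/-- right case : n = off r i , i ≥ 1 -/
lemma case_right (r : ℕ → ℕ) (hA : CondA r) (hB : CondB r) (i' n : ℕ)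
    (hn : n = off r (i' + 1)) : mu (form41 r) n < 3 := by
  set i := i' + 1 with hi
  rw [mu_eq, tail_eq_form41 r i n hn, VV_form41]
  -- prefix
  have hpre : ((List.range n).map (form41 r)).reverse
      = 2 :: fw (r i' :: ((List.range i').map r).reverse) := by
    rw [hn, prefix_chunks, chunksOf_reverse, hi, lrev_cons]
    exact chunksOf_eq_fw _ (by simp)
  rw [hpre, cfl_cons]
  set q := cfl (fw (r i' :: ((List.range i').map r).reverse)) with hq
  have hq1 : 1 ≤ q := cfl_fw_ge_one _ _
  set t := VV (IW (shfIt r i)) with ht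
  -- Master GT
  have hgt : GoodGT (shfIt r i) ((r i' + 1) :: ((List.range i').map r).reverse) := by
    constructor
    · rw [shfIt_head]
      exact (condA_bounds r hA i').1
    · intro heq
      rw [shfIt_head] at heq
      rw [hi] at heq
      rw [shf_shfIt, rev_map_range]
      apply goodGT_build
      intro j hj hprefix
      have hu : ∀ k, shfIt r (i+1) k = r (i' + k + 2) := fun k => congrArg r (by omega)
      rw [hu j]
      rcases eq_or_ne (r (i' + j + 2)) (r (i' - 1 - j)) with h | h
      · exact le_of_eq h
      · have hBu := (hB i').2 heq (j+1) (by omega) (by omega)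
        have hpre' : ∀ k, 1 ≤ k → k < j+1 → r (i' + k + 1) = r (i' - k) := by
          intro k hk1 hk2
          have hpk := hprefix (k-1) (by omega)
          rw [hu (k-1)] at hpk
          rw [show i' + k + 1 = i' + (k-1) + 2 by omega, hpk]
          congr 1
          omega
        have hconc := hBu hpre' (by
          rw [show i' + (j+1) + 1 = i' + j + 2 by omega, show i' - (j+1) = i' - 1 - j by omega]
          exact h)
        rw [show i' + (j+1) + 1 = i' + j + 2 by omega, show i' - (j+1) = i' - 1 - j by omega] at hconc
        omega
  have hmgt := MasterGT _ _ hgt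
  rw [fw_succ_head, cfl_cons, cfl_cons, ← hq] at hmgt
  push_cast at hmgt
  rw [← ht] at hmgt
  have hnum := num1 q t hq1 (by push_cast; linarith)
  push_cast
  linarith

/-- left case : n = off r i + 2 r i + 1 -/
lemma case_left (r : ℕ → ℕ) (hA : CondA r) (hB : CondB r) (hC : CondC01 r) (i n : ℕ)
    (hn : n = off r i + (2 * r i + 1)) : mu (form41 r) n < 3 := by
  have hpre : ((List.range n).map (form41 r)).reverse
      = fw (r i :: ((List.range i).map r).reverse) := by
    rw [hn, List.range_add, List.map_append, List.map_map, List.reverse_append, prefix_chunks,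
      chunksOf_reverse]
    have hsec : (List.range (2 * r i + 1)).map (form41 r ∘ (fun x => off r i + x))
        = 2 :: List.replicate (2 * r i) 1 := by
      apply ones_map
      · show form41 r (off r i + 0) = 2
        rw [form41_off, form41_lt _ _ (by rw [shfIt_head]; omega)]
        simp
      · intro m hm1 hm2
        show form41 r (off r i + m) = 1
        rw [form41_off, form41_lt _ _ (by rw [shfIt_head]; omega), if_neg (by omega),
          if_pos (by rw [shfIt_head]; omega)]
    rw [hsec, List.reverse_cons, List.reverse_replicate]
    cases hLrev : ((List.range i).map r).reverse with
    | nil => simp [chunksOf, fw]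
    | cons c t =>
      rw [chunksOf_eq_fw _ (by simp)]
      show (List.replicate (2 * r i) 1 ++ [2]) ++ (2 :: fw (c :: t)) = fw (r i :: c :: t)
      rw [show fw (r i :: c :: t) = List.replicate (2 * r i) 1 ++ 2 :: 2 :: fw (c :: t) from rfl]
      simp
  set Lrev := ((List.range i).map r).reverse with hLrevdef
  set w : ℕ → ℕ := fun k => form41 r (n + k) with hw
  have hwg : GoodW w := fun k => form41_good r (n + k)
  have hw0 : w 0 = 2 := by
    show form41 r (n + 0) = 2
    rw [Nat.add_zero, hn, form41_off, form41_lt _ _ (by rw [shfIt_head]; omega)]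
    rw [if_neg (by omega), if_neg (by rw [shfIt_head]; omega)]
  have hshfw : shf w = form41 (shfIt r (i+1)) := by
    funext k
    show form41 r (n + (k+1)) = _
    rw [show n + (k+1) = off r (i+1) + k by rw [hn, off_succ' r i]; omega, form41_off]
  set u := VV (IW (shfIt r (i+1))) with hu
  have hu3 : 1 ≤ u ∧ u ≤ 3 := VV_bounds _ (IW_good _)
  have hVVw : VV w = 2 + 1/(2 + 1/u) := by
    have hrec := VV_rec w hwg
    rw [hw0, hshfw, VV_form41] at hrec
    rw [hrec, ← hu]
    norm_num
  rw [mu_eq, hpre, ← hw, hVVw]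
  rcases Nat.eq_zero_or_pos (r i) with h0 | hpos
  · -- r i = 0 : easy numeric case
    have hp2 : (2:ℝ) ≤ cfl (fw (r i :: Lrev)) := by
      rw [h0]
      cases Lrev with
      | nil =>
        have : fw [(0:ℕ)] = [2] := by simp [fw]
        rw [this]
        rw [show cfl [2] = 2 + 1/cfl [] from rfl, cfl_nil]
        norm_num
      | cons c t =>
        have : fw (0 :: c :: t) = 2 :: 2 :: fw (c :: t) := by simp [fw]
        rw [this]
        have := cfl_cons_ge 2 (2 :: fw (c :: t))
        push_cast at this
        linarith
    have ht' : 2 + 1/3 ≤ 2 + 1/u := by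
      have : (1:ℝ)/3 ≤ 1/u := by
        rw [div_le_div_iff₀ (by norm_num) (by linarith [hu3.1])]
        linarith [hu3.2]
      linarith
    linarith [num0 _ _ hp2 ht']
  · -- r i = c + 1
    obtain ⟨c, hc⟩ : ∃ c, r i = c + 1 := ⟨r i - 1, by omega⟩
    set q := cfl (fw (c :: Lrev)) with hqdef
    have hq1 : 1 ≤ q := cfl_fw_ge_one _ _
    have hplt : cfl (fw (r i :: Lrev)) = 1 + 1/(1 + 1/q) := by
      rw [hc, fw_succ_head, cfl_cons, cfl_cons, ← hqdef]
      push_cast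
      ring
    -- GoodLT
    have hGL : GoodLT (shfIt r (i+1)) (c :: Lrev) := by
      rcases Nat.lt_or_ge c (r (i+1)) with hlt | hge
      · exact Or.inl (by rw [shfIt_head]; exact hlt)
      · have heq : r (i+1) = c := by
          have := (condA_bounds r hA i).2
          omega
        refine Or.inr ⟨by rw [shfIt_head]; exact heq, ?_⟩
        rw [shf_shfIt, hLrevdef, rev_map_range]
        have hdec : r (i+1) + 1 = r i := by omega
        obtain ⟨j0, hj01, hj0i, hj0lt⟩ := hC.2 i hdec
        have hex : ∃ j, j < i ∧ shfIt r (i+2) j ≠ r (i-1-j) := by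
          refine ⟨j0 - 1, by omega, ?_⟩
          have h1 : shfIt r (i+2) (j0-1) = r (i + j0 + 1) := congrArg r (by omega)
          have h2 : i - 1 - (j0 - 1) = i - j0 := by omega
          rw [h1, h2]
          omega
        classical
        set jm := Nat.find hex with hjm
        have hspec := Nat.find_spec hex
        have hmin : ∀ k, k < jm → shfIt r (i+2) k = r (i-1-k) := by
          intro k hk
          have hki : k < i := by omega
          have := Nat.find_min hex hk
          push_neg at this
          exact this hki
        apply goodLT_build i _ _ jm hspec.1 hmin
        -- v jm < u jm
        have hBu := (hB i).1 hdec (jm+1) (by omega) (by omega)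
        have hpre' : ∀ k, 1 ≤ k → k < jm+1 → r (i + k + 1) = r (i - k) := by
          intro k hk1 hk2
          have hpk := hmin (k-1) (by omega)
          have h1 : shfIt r (i+2) (k-1) = r (i + k + 1) := congrArg r (by omega)
          have h2 : i - 1 - (k-1) = i - k := by omega
          rw [h1, h2] at hpk
          exact hpk
        have hne : r (i + (jm+1) + 1) ≠ r (i - (jm+1)) := by
          have := hspec.2
          have h1 : shfIt r (i+2) jm = r (i + (jm+1) + 1) := congrArg r (by omega)
          have h2 : i - 1 - jm = i - (jm+1) := by omega
          rw [h1, h2] at this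
          exact this
        have hconc := hBu hpre' hne
        have h1 : shfIt r (i+2) jm = r (i + (jm+1) + 1) := congrArg r (by omega)
        have h2 : i - 1 - jm = i - (jm+1) := by omega
        show r (i - 1 - jm) < shfIt r (i+2) jm
        rw [h1, h2]
        exact hconc
    have hult : u < q := by
      have := MasterLT _ _ hGL
      rw [← hqdef] at this
      exact this
    have hnum := num2 q u hq1 (by linarith [hu3.1]) hult
    rw [hplt]
    linarith


/-- Theorem 4.1, sufficiency: if `r ∈ M₀₁` and `A` is of form (4.1) built from `r`,
then `μ_n(A) < 3` for all `n ≥ 1`. -/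
theorem form41_mu_lt_three (r : ℕ → ℕ) (hr : MemM01 r) :
    ∀ n, 1 ≤ n → mu (form41 r) n < 3 := by
  intro n hn1
  obtain ⟨i, m, hn, hm⟩ := exists_block r n
  rcases Nat.eq_zero_or_pos m with rfl | hm1
  · cases i with
    | zero => simp [off] at hn; omega
    | succ i' => exact case_right r hr.1 hr.2.1 i' n (by omega)
  · rcases Nat.lt_or_ge m (2 * r i + 1) with hmid | hleft
    · exact case_middle r i m n hm1 (by omega) hn
    · exact case_left r hr.1 hr.2.1 hr.2.2 i n (by omega)
end

section
/- Let r(1), r(2), … be a sequence in M₀₁ which is not the constant zero sequence. Then there is a positive integer r such that the sequence is of one of the following types: (R₀) the constant sequence r, r, r, …; (R₀₁) the sequence r−1, r, r, r, …; or (R) the concatenation (r−1)_{s(1)}, r, (r−1)_{s(2)}, r, (r−1)_{s(3)}, r, … (where (r−1)_k denotes the value r−1 repeated k times) for some sequence s(1), s(2), … in M₁₀ with s(i) ≠ 0 for infinitely many i. -/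
section Part1

variable {r : ℕ → ℕ} {m : ℕ}

private lemma condA_nat (hA : CondA r) (i : ℕ) : r (i+1) ≤ r i + 1 ∧ r i ≤ r (i+1) + 1 := by
  have h := hA i; rw [abs_le] at h; omega

private lemma Bfall (hB : CondB r) {i j : ℕ} (hf : r (i + 1) + 1 = r i) (hj1 : 1 ≤ j) (hj2 : j ≤ i)
    (hpal : ∀ k, 1 ≤ k → k < j → r (i + k + 1) = r (i - k)) (hne : r (i + j + 1) ≠ r (i - j)) :
    r (i - j) < r (i + j + 1) := (hB i).1 hf j hj1 hj2 hpal hne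

private lemma Brise (hB : CondB r) {i j : ℕ} (hf : r (i + 1) = r i + 1) (hj1 : 1 ≤ j) (hj2 : j ≤ i)
    (hpal : ∀ k, 1 ≤ k → k < j → r (i + k + 1) = r (i - k)) (hne : r (i + j + 1) ≠ r (i - j)) :
    r (i + j + 1) < r (i - j) := (hB i).2 hf j hj1 hj2 hpal hne

private lemma exists_min_sat {P : ℕ → Prop} [DecidablePred P] (h : ∃ t, P t) :
    ∃ c, P c ∧ ∀ t, t < c → ¬ P t :=
  ⟨Nat.find h, Nat.find_spec h, fun _ ht => Nat.find_min h ht⟩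

private lemma exists_max_below {P : ℕ → Prop} [DecidablePred P] {b t0 : ℕ} (ht0 : P t0)
    (hlt : t0 < b) : ∃ d, P d ∧ d < b ∧ ∀ t, d < t → t < b → ¬ P t := by
  have hex : ∃ k, P (b - 1 - k) :=
    ⟨b - 1 - t0, by rw [show b - 1 - (b - 1 - t0) = t0 from by omega]; exact ht0⟩
  refine ⟨b - 1 - Nat.find hex, Nat.find_spec hex, by omega, ?_⟩
  intro t h1 h2 hP
  have hle : Nat.find hex ≤ b - 1 - t :=
    Nat.find_le (by rw [show b - 1 - (b - 1 - t) = t from by omega]; exact hP)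
  omega

private lemma two_valued (hA : CondA r) (hB : CondB r) (hC : CondC01 r)
    (hmin : ∀ t, m ≤ r t) (hatt : ∃ t, r t = m) : ∀ t, r t ≤ m + 1 := by
  by_contra hcon
  push_neg at hcon
  obtain ⟨t2, ht2⟩ := hcon
  have hex : ∃ t, m + 2 ≤ r t := ⟨t2, by omega⟩
  obtain ⟨c, hc, hcmin'⟩ := exists_min_sat hex
  have hcmin : ∀ t, t < c → r t < m + 2 := fun t ht => by have := hcmin' t ht; omega
  obtain ⟨e, he, hemin⟩ := exists_min_sat hatt
  rcases lt_trichotomy e c with hec | hec | hec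
  · -- e < c : no minimum before the first big value
    obtain ⟨d, hd, hdlt, hdmax⟩ := exists_max_below (P := fun t => r t = m) he hec
    have hbet : ∀ t, d < t → t < c → r t = m + 1 := by
      intro t h1 h2
      have h3 := hdmax t h1 h2
      have := hmin t; have := hcmin t h2
      omega
    have hc2 : d + 2 ≤ c := by
      rcases Nat.lt_or_ge (d+1) c with h | h
      · omega
      · have hAd := condA_nat hA d
        have hx : r (d+1) = r c := by rw [show d + 1 = c from by omega]
        omega
    have hrc1 : r (c-1) = m + 1 := hbet (c-1) (by omega) (by omega)
    have hrc : r c = m + 2 := by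
      have hAc := condA_nat hA (c-1)
      rw [show c - 1 + 1 = c from by omega] at hAc
      omega
    by_cases hd0 : d = 0
    · -- d = 0
      have hr0 : r 0 = m := hd0 ▸ hd
      by_cases hcc : c = 2
      · have h1v : r 1 = m + 1 := hbet 1 (by omega) (by omega)
        have h2v : r (1 + 1) = m + 2 := by rw [show 1 + 1 = c from by omega]; exact hrc
        have hA2 := condA_nat hA (1+1)
        have hrise1 : r (1 + 1) = r 1 + 1 := by omega
        have hne : r (1 + 1 + 1) ≠ r (1 - 1) := by
          rw [show (1:ℕ) - 1 = 0 from rfl, hr0]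
          omega
        have hcon := Brise hB hrise1 le_rfl le_rfl (by intro k h1 h2; omega) hne
        rw [show (1:ℕ) - 1 = 0 from rfl, hr0] at hcon
        omega
      · -- c ≥ 3
        have hc3 : 3 ≤ c := by omega
        have hrisec : r (c - 1 + 1) = r (c-1) + 1 := by
          rw [show c - 1 + 1 = c from by omega, hrc1, hrc]
        have hAc := condA_nat hA c
        have hc1v : r (c + 1) = m + 1 := by
          by_contra hne'
          have hne2 : r (c - 1 + 1 + 1) ≠ r (c - 1 - 1) := by
            rw [show c - 1 + 1 + 1 = c + 1 from by omega, show c - 1 - 1 = c - 2 from by omega,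
              hbet (c-2) (by omega) (by omega)]
            exact hne'
          have hcon := Brise hB hrisec le_rfl (by omega) (by intro k h1 h2; omega) hne2
          rw [show c - 1 + 1 + 1 = c + 1 from by omega, show c - 1 - 1 = c - 2 from by omega,
            hbet (c-2) (by omega) (by omega)] at hcon
          omega
        by_cases hQ : ∃ j, (2 ≤ j ∧ j + 1 ≤ c ∧ r (c + j) ≠ m + 1)
        · obtain ⟨j0, ⟨hj02, hj0c, hj0ne⟩, hj0min⟩ := exists_min_sat hQ
          have hfor : ∀ k, 1 ≤ k → k < j0 → r (c + k) = m + 1 := by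
            intro k h1 h2
            rcases Nat.lt_or_ge k 2 with h | h
            · rw [show k = 1 from by omega]; exact hc1v
            · by_contra hne'
              exact hj0min k h2 ⟨h, by omega, hne'⟩
          have hpal : ∀ k, 1 ≤ k → k < j0 → r (c - 1 + k + 1) = r (c - 1 - k) := by
            intro k h1 h2
            rw [show c - 1 + k + 1 = c + k from by omega, hfor k h1 h2,
              show c - 1 - k = c - (k+1) from by omega,
              hbet (c - (k+1)) (by omega) (by omega)]
          have hq : r (c + j0) = m := by
            by_cases hj0c2 : j0 + 2 ≤ c
            · have hne2 : r (c - 1 + j0 + 1) ≠ r (c - 1 - j0) := by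
                rw [show c - 1 + j0 + 1 = c + j0 from by omega,
                  show c - 1 - j0 = c - (j0 + 1) from by omega,
                  hbet (c - (j0+1)) (by omega) (by omega)]
                exact hj0ne
              have hcon := Brise hB hrisec (by omega) (by omega) hpal hne2
              rw [show c - 1 + j0 + 1 = c + j0 from by omega,
                show c - 1 - j0 = c - (j0 + 1) from by omega,
                hbet (c - (j0+1)) (by omega) (by omega)] at hcon
              have := hmin (c + j0); omega
            · by_contra hq'
              have hne2 : r (c - 1 + j0 + 1) ≠ r (c - 1 - j0) := by
                rw [show c - 1 + j0 + 1 = c + j0 from by omega,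
                  show c - 1 - j0 = 0 from by omega, hr0]
                exact fun h => hq' h
              have hcon := Brise hB hrisec (by omega) (by omega) hpal hne2
              rw [show c - 1 + j0 + 1 = c + j0 from by omega,
                show c - 1 - j0 = 0 from by omega, hr0] at hcon
              have := hmin (c + j0); omega
          -- fall at c
          have hfallc : r (c + 1) + 1 = r c := by omega
          have hpal2 : ∀ k, 1 ≤ k → k < j0 - 1 → r (c + k + 1) = r (c - k) := by
            intro k h1 h2
            rw [show c + k + 1 = c + (k+1) from by omega, hfor (k+1) (by omega) (by omega),
              hbet (c - k) (by omega) (by omega)]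
          have hne3 : r (c + (j0 - 1) + 1) ≠ r (c - (j0 - 1)) := by
            rw [show c + (j0 - 1) + 1 = c + j0 from by omega, hq,
              hbet (c - (j0 - 1)) (by omega) (by omega)]
            omega
          have hcon2 := Bfall hB hfallc (by omega) (by omega) hpal2 hne3
          rw [show c + (j0 - 1) + 1 = c + j0 from by omega, hq,
            hbet (c - (j0 - 1)) (by omega) (by omega)] at hcon2
          omega
        · push_neg at hQ
          have hpal : ∀ k, 1 ≤ k → k < c - 1 → r (c - 1 + k + 1) = r (c - 1 - k) := by
            intro k h1 h2
            have hfork : r (c + k) = m + 1 := by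
              rcases Nat.lt_or_ge k 2 with h | h
              · rw [show k = 1 from by omega]; exact hc1v
              · exact hQ k h (by omega)
            rw [show c - 1 + k + 1 = c + k from by omega, hfork,
              show c - 1 - k = c - (k+1) from by omega,
              hbet (c - (k+1)) (by omega) (by omega)]
          have hne2 : r (c - 1 + (c - 1) + 1) ≠ r (c - 1 - (c - 1)) := by
            rw [show c - 1 + (c - 1) + 1 = c + (c - 1) from by omega,
              hQ (c-1) (by omega) (by omega),
              show c - 1 - (c - 1) = 0 from by omega, hr0]
            omega
          have hcon := Brise hB hrisec (by omega) le_rfl hpal hne2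
          rw [show c - 1 + (c - 1) + 1 = c + (c - 1) from by omega,
            hQ (c-1) (by omega) (by omega),
            show c - 1 - (c - 1) = 0 from by omega, hr0] at hcon
          omega
    · -- d ≥ 1
      have hrised : r (d + 1) = r d + 1 := by
        rw [hbet (d+1) (by omega) (by omega), hd]
      by_cases hKex : ∃ k, (1 ≤ k ∧ k ≤ d ∧ k + d + 2 ≤ c ∧ r (d - k) ≠ m + 1)
      · obtain ⟨K, ⟨hK1, hK2, hK3, hK4⟩, hKmin⟩ := exists_min_sat hKex
        have hpal : ∀ k, 1 ≤ k → k < K → r (d + k + 1) = r (d - k) := by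
          intro k h1 h2
          have hnot := hKmin k h2
          have hfor : r (d + k + 1) = m + 1 := hbet _ (by omega) (by omega)
          have hback : r (d - k) = m + 1 := by
            by_contra hne'
            exact hnot ⟨h1, by omega, by omega, hne'⟩
          rw [hfor, hback]
        have hfor : r (d + K + 1) = m + 1 := hbet _ (by omega) (by omega)
        have hne : r (d + K + 1) ≠ r (d - K) := by
          rw [hfor]; exact fun hh => hK4 hh.symm
        have hcon := Brise hB hrised hK1 hK2 hpal hne
        have := hcmin (d - K) (by omega)
        omega
      · push_neg at hKex
        by_cases hJd : c - d - 1 ≤ d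
        · have hpal : ∀ k, 1 ≤ k → k < c - d - 1 → r (d + k + 1) = r (d - k) := by
            intro k h1 h2
            rw [hbet (d+k+1) (by omega) (by omega), hKex k h1 (by omega) (by omega)]
          have hne : r (d + (c - d - 1) + 1) ≠ r (d - (c - d - 1)) := by
            rw [show d + (c - d - 1) + 1 = c from by omega]
            have := hcmin (d - (c - d - 1)) (by omega)
            omega
          have hcon := Brise hB hrised (by omega) hJd hpal hne
          rw [show d + (c - d - 1) + 1 = c from by omega] at hcon
          have := hcmin (d - (c - d - 1)) (by omega)
          omega
        · have hall : ∀ k, 1 ≤ k → k ≤ d → r (d - k) = m + 1 := by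
            intro k h1 h2
            exact hKex k h1 h2 (by omega)
          have hfalld : r (d - 1 + 1) + 1 = r (d - 1) := by
            rw [show d - 1 + 1 = d from by omega, hd]
            have h1 : r (d - 1) = m + 1 := by
              have := hall 1 le_rfl (by omega)
              rw [show d - 1 = d - 1 from rfl]
              omega
            omega
          obtain ⟨j, hj1, hj2, hjlt⟩ := hC.2 (d - 1) hfalld
          have hL : r (d - 1 - j) = m + 1 := by
            rw [show d - 1 - j = d - (j + 1) from by omega]
            exact hall (j+1) (by omega) (by omega)
          have hR : r (d - 1 + j + 1) = m + 1 := by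
            rw [show d - 1 + j + 1 = d + j from by omega]
            exact hbet (d + j) (by omega) (by omega)
          omega
  · exfalso
    have : r c = m := by rw [← hec]; exact he
    omega
  · -- c < e
    have hefirst : ∀ t, t < e → m + 1 ≤ r t := fun t ht => by
      have h1 := hemin t ht; have h2 := hmin t; omega
    obtain ⟨c', hc'P, hc'lt, hc'max⟩ := exists_max_below (P := fun t => m + 2 ≤ r t) hc hec
    have hafter : ∀ t, c' < t → t < e → r t = m + 1 := fun t h1 h2 => by
      have h3 := hc'max t h1 h2; have := hefirst t h2; omega
    have he2 : c' + 2 ≤ e := by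
      by_contra hh
      have hee : e = c' + 1 := by omega
      have hAc := condA_nat hA c'
      rw [← hee] at hAc
      omega
    have hc'v : r c' = m + 2 := by
      have h1 := hafter (c'+1) (by omega) (by omega)
      have h2 := condA_nat hA c'
      omega
    have hfallc' : r (c' + 1) + 1 = r c' := by
      rw [hafter (c'+1) (by omega) (by omega), hc'v]
    by_cases hK : ∃ k, (1 ≤ k ∧ k ≤ c' ∧ k + c' + 2 ≤ e ∧ r (c' - k) ≠ m + 1)
    · obtain ⟨K, ⟨h1, h2, h3, h4⟩, hKmin⟩ := exists_min_sat hK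
      have hpal : ∀ k, 1 ≤ k → k < K → r (c' + k + 1) = r (c' - k) := by
        intro k hk1 hk2
        have hback : r (c' - k) = m + 1 := by
          by_contra hne'
          exact hKmin k hk2 ⟨hk1, by omega, by omega, hne'⟩
        rw [hafter (c' + k + 1) (by omega) (by omega), hback]
      have hfor : r (c' + K + 1) = m + 1 := hafter (c' + K + 1) (by omega) (by omega)
      have hne : r (c' + K + 1) ≠ r (c' - K) := by
        rw [hfor]; exact fun h => h4 h.symm
      have hcon := Bfall hB hfallc' h1 h2 hpal hne
      have := hefirst (c' - K) (by omega)
      omega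
    · push_neg at hK
      by_cases hJc : e - c' - 1 ≤ c'
      · have hpal : ∀ k, 1 ≤ k → k < e - c' - 1 → r (c' + k + 1) = r (c' - k) := by
          intro k hk1 hk2
          rw [hafter (c' + k + 1) (by omega) (by omega), hK k hk1 (by omega) (by omega)]
        have hne : r (c' + (e - c' - 1) + 1) ≠ r (c' - (e - c' - 1)) := by
          rw [show c' + (e - c' - 1) + 1 = e from by omega, he]
          have := hefirst (c' - (e - c' - 1)) (by omega)
          omega
        have hcon := Bfall hB hfallc' (by omega) hJc hpal hne
        rw [show c' + (e - c' - 1) + 1 = e from by omega, he] at hcon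
        have := hmin (c' - (e - c' - 1))
        omega
      · obtain ⟨j, hj1, hj2, hjlt⟩ := hC.2 c' hfallc'
        have hL : r (c' - j) = m + 1 := hK j hj1 hj2 (by omega)
        have hR : r (c' + j + 1) = m + 1 := hafter _ (by omega) (by omega)
        omega

end Part1
section Part3

variable {r : ℕ → ℕ} {m : ℕ}

private lemma Bfall' (hB : CondB r) {i j : ℕ} (hf : r (i + 1) + 1 = r i) (hj1 : 1 ≤ j) (hj2 : j ≤ i)
    (hpal : ∀ k, 1 ≤ k → k < j → r (i + k + 1) = r (i - k)) (hne : r (i + j + 1) ≠ r (i - j)) :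
    r (i - j) < r (i + j + 1) := (hB i).1 hf j hj1 hj2 hpal hne

private lemma Brise' (hB : CondB r) {i j : ℕ} (hf : r (i + 1) = r i + 1) (hj1 : 1 ≤ j) (hj2 : j ≤ i)
    (hpal : ∀ k, 1 ≤ k → k < j → r (i + k + 1) = r (i - k)) (hne : r (i + j + 1) ≠ r (i - j)) :
    r (i + j + 1) < r (i - j) := (hB i).2 hf j hj1 hj2 hpal hne

private lemma exists_min_sat' {P : ℕ → Prop} [DecidablePred P] (h : ∃ t, P t) :
    ∃ c, P c ∧ ∀ t, t < c → ¬ P t :=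
  ⟨Nat.find h, Nat.find_spec h, fun _ ht => Nat.find_min h ht⟩

private noncomputable def enumPos (Q : ℕ → Prop) [DecidablePred Q]
    (h : ∀ N, ∃ t, N ≤ t ∧ Q t) : ℕ → ℕ
  | 0 => Nat.find (h 0)
  | k + 1 => Nat.find (h (enumPos Q h k + 1))

private lemma enumPos_spec (Q : ℕ → Prop) [DecidablePred Q] (h : ∀ N, ∃ t, N ≤ t ∧ Q t) (k : ℕ) :
    Q (enumPos Q h k) := by
  cases k with
  | zero => exact (Nat.find_spec (h 0)).2
  | succ k => exact (Nat.find_spec (h (enumPos Q h k + 1))).2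

private lemma enumPos_lt (Q : ℕ → Prop) [DecidablePred Q] (h : ∀ N, ∃ t, N ≤ t ∧ Q t) (k : ℕ) :
    enumPos Q h k < enumPos Q h (k+1) := by
  have := (Nat.find_spec (h (enumPos Q h k + 1))).1
  have heq : enumPos Q h (k+1) = Nat.find (h (enumPos Q h k + 1)) := rfl
  omega

private lemma enumPos_first (Q : ℕ → Prop) [DecidablePred Q] (h : ∀ N, ∃ t, N ≤ t ∧ Q t) {t : ℕ}
    (ht : t < enumPos Q h 0) : ¬ Q t := by
  have heq : enumPos Q h 0 = Nat.find (h 0) := rfl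
  have := Nat.find_min (h 0) (show t < Nat.find (h 0) from by omega)
  exact fun hQ => this ⟨Nat.zero_le t, hQ⟩

private lemma enumPos_gap (Q : ℕ → Prop) [DecidablePred Q] (h : ∀ N, ∃ t, N ≤ t ∧ Q t) (k : ℕ)
    {t : ℕ} (h1 : enumPos Q h k < t) (h2 : t < enumPos Q h (k+1)) : ¬ Q t := by
  have heq : enumPos Q h (k+1) = Nat.find (h (enumPos Q h k + 1)) := rfl
  have := Nat.find_min (h (enumPos Q h k + 1)) (show t < Nat.find _ from by omega)
  exact fun hQ => this ⟨by omega, hQ⟩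

private lemma blockSeq_eq (m : ℕ) : ∀ (n : ℕ) (r p s : ℕ → ℕ),
    (∀ k, p k < p (k+1)) → (∀ k, r (p k) = m + 1) →
    (∀ t, (∀ k, p k ≠ t) → r t = m) → p 0 = s 0 → (∀ k, p (k+1) = p k + s (k+1) + 1) →
    r n = blockSeq m (m+1) s n := by
  intro n
  induction n using Nat.strong_induction_on with
  | _ n ih =>
    intro r p s h1 h2 h3 h4 h5
    have hmle : ∀ a b, a ≤ b → p a ≤ p b := by
      intro a b hab
      induction b with
      | zero => have ha : a = 0 := by omega
                rw [ha]
      | succ b ihb =>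
        rcases Nat.eq_or_lt_of_le hab with h | h
        · rw [h]
        · have := ihb (by omega); have := h1 b; omega
    rw [blockSeq]
    split
    · rename_i hlt
      split
      · rename_i hlt2
        apply h3
        intro k heq
        have := hmle 0 k (Nat.zero_le k)
        omega
      · rename_i hge2
        have hn : n = p 0 := by omega
        rw [hn, h2 0]
    · rename_i hge
      have hcore := ih (n - (s 0 + 1)) (by omega) (fun t => r (t + (s 0 + 1)))
        (fun k => p (k+1) - (s 0 + 1)) (fun k => s (k+1))
        (by intro k
            have a1 := hmle 0 k (Nat.zero_le k)
            have a2 := h1 k; have a3 := h1 (k+1)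
            omega)
        (by intro k
            have a1 := hmle 0 k (Nat.zero_le k)
            have a2 := h1 k
            rw [show p (k+1) - (s 0 + 1) + (s 0 + 1) = p (k+1) from by omega]
            exact h2 (k+1))
        (by intro t ht
            apply h3
            intro k heq
            cases k with
            | zero => omega
            | succ k' =>
              have a1 := hmle 0 k' (Nat.zero_le k')
              have a2 := h1 k'
              exact ht k' (by omega))
        (by
            have := h5 0
            omega)
        (by intro k
            have a1 := hmle 0 k (Nat.zero_le k)
            have a2 := h1 k; have a3 := h1 (k+1)
            have a4 := h5 (k+1)
            omega)
      rw [show n - (s 0 + 1) + (s 0 + 1) = n from by omega] at hcore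
      exact hcore

private lemma part3 (hA : CondA r) (hB : CondB r) (hC : CondC01 r)
    (hmin : ∀ t, m ≤ r t) (htwo : ∀ t, r t ≤ m + 1)
    (hinfm : ∀ N, ∃ t, N ≤ t ∧ r t = m) (hocc1 : ∃ t, r t = m + 1) :
    ∃ s : ℕ → ℕ, MemM10 s ∧ (∀ N, ∃ i, N ≤ i ∧ s i ≠ 0) ∧ ∀ n, r n = blockSeq m (m+1) s n := by
  -- infinitely many occurrences of m+1
  have hinfR : ∀ N, ∃ t, N ≤ t ∧ r t = m + 1 := by
    by_contra hh
    push_neg at hh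
    obtain ⟨N, hN⟩ := hh
    obtain ⟨t1, ht1⟩ := hocc1
    have ht1N : t1 < N := by
      by_contra hh2
      exact hN t1 (by omega) ht1
    have hi1 : r (Nat.findGreatest (fun t => r t = m + 1) N) = m + 1 :=
      Nat.findGreatest_spec (P := fun t => r t = m + 1) (le_of_lt ht1N) ht1
    set i1 := Nat.findGreatest (fun t => r t = m + 1) N with hi1def
    have hgt : ∀ t, i1 < t → r t = m := by
      intro t ht
      rcases Nat.lt_or_ge t (N+1) with h | h
      · have h2 := Nat.findGreatest_is_greatest (P := fun t => r t = m + 1) (n := N)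
          (k := t) (by omega) (by omega)
        have := hmin t; have := htwo t
        omega
      · have h2 := hN t (by omega)
        have := hmin t; have := htwo t
        omega
    have hfall : r (i1 + 1) + 1 = r i1 := by rw [hgt (i1+1) (by omega), hi1]
    obtain ⟨j, hj1, hj2, hjlt⟩ := hC.2 i1 hfall
    have h3 := hgt (i1 + j + 1) (by omega)
    have := hmin (i1 - j)
    omega
  set p : ℕ → ℕ := enumPos (fun t => r t = m + 1) hinfR with hpdef
  have hpR : ∀ k, r (p k) = m + 1 := fun k => enumPos_spec _ hinfR k
  have hmono : ∀ k, p k < p (k+1) := fun k => enumPos_lt _ hinfR k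
  have hint0 : ∀ t, t < p 0 → r t = m := fun t ht => by
    have h1 := enumPos_first _ hinfR ht
    have := hmin t; have := htwo t; omega
  have hint : ∀ k t, p k < t → t < p (k+1) → r t = m := fun k t h1 h2 => by
    have h3 := enumPos_gap _ hinfR k h1 h2
    have := hmin t; have := htwo t; omega
  set s : ℕ → ℕ := fun k => match k with
    | 0 => p 0
    | k' + 1 => p (k'+1) - p k' - 1 with hsdef
  have hs0 : p 0 = s 0 := rfl
  have hsS : ∀ k, p (k+1) = p k + s (k+1) + 1 := fun k => by
    have h1 := hmono k
    have h2 : s (k+1) = p (k+1) - p k - 1 := rfl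
    omega
  -- basic consequences
  have hkp : ∀ k, k ≤ p k := by
    intro k
    induction k with
    | zero => exact Nat.zero_le _
    | succ k ih => have := hmono k; omega
  have hmole : ∀ a b, a ≤ b → p a ≤ p b := by
    intro a b hab
    induction b with
    | zero => have ha : a = 0 := by omega
              rw [ha]
    | succ b ihb =>
      rcases Nat.eq_or_lt_of_le hab with h | h
      · rw [h]
      · have := ihb (by omega); have := hmono b; omega
  have hpges : ∀ a, s a ≤ p a := by
    intro a
    cases a with
    | zero => omega
    | succ a' => have := hsS a'; omega
  have hgapm : ∀ a t, t < p a → p a ≤ t + s a → r t = m := by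
    intro a t h1 h2
    cases a with
    | zero => exact hint0 t h1
    | succ a' =>
      have := hsS a'
      exact hint a' t (by omega) h1
  have hintf : ∀ k t, p k < t → t < p k + s (k+1) + 1 → r t = m :=
    fun k t h1 h2 => hint k t h1 (by have := hsS k; omega)
  have hidx : ∀ a b t, a ≤ b → p a ≤ t → t ≤ p b → r t = m + 1 →
      ∃ k, a ≤ k ∧ k ≤ b ∧ p k = t := by
    intro a b t hab h1 h2 ht
    have hKs : p (Nat.findGreatest (fun k => p k ≤ t) b) ≤ t :=
      Nat.findGreatest_spec (P := fun k => p k ≤ t) hab h1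
    have hKa : a ≤ Nat.findGreatest (fun k => p k ≤ t) b :=
      Nat.le_findGreatest hab h1
    have hKb : Nat.findGreatest (fun k => p k ≤ t) b ≤ b :=
      Nat.findGreatest_le b
    set K := Nat.findGreatest (fun k => p k ≤ t) b with hKdef
    rcases Nat.eq_or_lt_of_le hKs with he | hlt
    · exact ⟨K, hKa, hKb, he⟩
    · exfalso
      have hKb' : K < b := by
        rcases Nat.eq_or_lt_of_le hKb with h | h
        · rw [h] at hlt; omega
        · exact h
      have hgt2 : t < p (K+1) := by
        by_contra hcon
        push_neg at hcon
        have := Nat.findGreatest_is_greatest (P := fun k => p k ≤ t) (n := b) (k := K + 1)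
          (by omega) (by omega)
        exact this hcon
      have := hint K t hlt hgt2
      omega
  -- Fall-center identities (rise in s): matched R positions
  have hF1 : ∀ i j, j ≤ i → s (i+1) = s i + 1 →
      (∀ k, 1 ≤ k → k < j → s (i + k + 1) = s (i - k)) →
      ∀ k, k < j → p (i + k + 1) + p (i - 1 - k) = 2 * p i + 1 := by
    intro i j hij hrise hpal k
    induction k with
    | zero =>
      intro h0
      have h1 := hsS i
      have h2 := hsS (i-1)
      rw [show i - 1 + 1 = i from by omega] at h2
      rw [show i + 0 + 1 = i + 1 from by omega, show i - 1 - 0 = i - 1 from by omega]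
      omega
    | succ k ih =>
      intro hk
      have hprev := ih (by omega)
      have h1 := hsS (i + k + 1)
      have h2 := hsS (i - 1 - (k+1))
      have hpk := hpal (k+1) (by omega) hk
      rw [show i - 1 - (k+1) + 1 = i - 1 - k from by omega] at h2
      rw [show i + (k+1) + 1 = i + k + 1 + 1 from by omega]
      rw [show i + (k+1) + 1 = i + k + 1 + 1 from by omega] at hpk
      rw [show i - 1 - k = i - (k+1) from by omega] at h2
      rw [show i - 1 - k = i - (k+1) from by omega] at hprev
      omega
  have hF2 : ∀ i j, 1 ≤ j → j ≤ i → s (i+1) = s i + 1 →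
      (∀ k, 1 ≤ k → k < j → s (i + k + 1) = s (i - k)) →
      ∀ o, 1 ≤ o → o + p (i - j) ≤ p i → r (p i + o + 1) = r (p i - o) := by
    intro i j hj1 hj2 hrise hpal o ho1 ho2
    have hPid : p (i + (j-1) + 1) + p (i - 1 - (j-1)) = 2 * p i + 1 :=
      hF1 i j hj2 hrise hpal (j-1) (by omega)
    rw [show i + (j-1) + 1 = i + j from by omega,
      show i - 1 - (j-1) = i - j from by omega] at hPid
    have hm1 := hmole (i-j) i (by omega)
    by_cases hyR : r (p i + o + 1) = m + 1
    · obtain ⟨k, hk1, hk2, hk3⟩ := hidx i (i+j) (p i + o + 1) (by omega) (by omega)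
        (by omega) hyR
      have hki : i < k := by
        by_contra hh2
        have := hmole k i (by omega)
        omega
      have hPid2 := hF1 i j hj2 hrise hpal (k - i - 1) (by omega)
      rw [show i + (k - i - 1) + 1 = k from by omega] at hPid2
      have hxp : p (i - 1 - (k - i - 1)) = p i - o := by omega
      rw [hyR, ← hxp, hpR]
    · by_cases hxR : r (p i - o) = m + 1
      · obtain ⟨k, hk1, hk2, hk3⟩ := hidx (i-j) i (p i - o) (by omega) (by omega)
          (by omega) hxR
        have hki : k < i := by
          by_contra hh2
          have := hmole i k (by omega)
          omega
        have hPid2 := hF1 i j hj2 hrise hpal (i - 1 - k) (by omega)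
        rw [show i - 1 - (i - 1 - k) = k from by omega] at hPid2
        have hyp : p (i + (i - 1 - k) + 1) = p i + o + 1 := by omega
        rw [hxR, ← hyp, hpR]
      · have a1 := hmin (p i + o + 1); have a2 := htwo (p i + o + 1)
        have a3 := hmin (p i - o); have a4 := htwo (p i - o)
        omega
  -- full-palindrome contradiction via C01
  have hNOFULL : ∀ i, 1 ≤ i → s (i+1) = s i + 1 →
      (∀ k, 1 ≤ k → k < i → s (i + k + 1) = s (i - k)) →
      s 0 ≤ s (i + i + 1) → False := by
    intro i hi hrise hpal hge
    have hfall : r (p i + 1) + 1 = r (p i) := by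
      have h1 : r (p i + 1) = m := hintf i (p i + 1) (by omega) (by omega)
      rw [h1, hpR]
    have hPid : p (i + (i-1) + 1) + p (i - 1 - (i-1)) = 2 * p i + 1 :=
      hF1 i i le_rfl hrise hpal (i-1) (by omega)
    rw [show i + (i-1) + 1 = i + i from by omega,
      show i - 1 - (i-1) = 0 from by omega] at hPid
    obtain ⟨jr, hjr1, hjr2, hjrlt⟩ := hC.2 (p i) hfall
    have hEQ : r (p i + jr + 1) = r (p i - jr) := by
      by_cases hreg : jr + p 0 ≤ p i
      · exact hF2 i i hi le_rfl hrise hpal jr hjr1 (by rw [Nat.sub_self]; exact hreg)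
      · have hx : r (p i - jr) = m := hgapm 0 (p i - jr) (by omega) (by omega)
        have hy : r (p i + jr + 1) = m := hintf (i+i) (p i + jr + 1) (by omega) (by omega)
        rw [hx, hy]
    rw [hEQ] at hjrlt
    exact lt_irrefl _ hjrlt
  -- CondB clause 2 for s (rise in s)
  have hF3 : ∀ i j, 1 ≤ j → j ≤ i → s (i+1) = s i + 1 →
      (∀ k, 1 ≤ k → k < j → s (i + k + 1) = s (i - k)) →
      s (i - j) < s (i + j + 1) → False := by
    intro i j hj1 hj2 hrise hpal hgt
    rcases Nat.eq_or_lt_of_le hj2 with hji | hji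
    · refine hNOFULL i (by omega) hrise (fun k h1 h2 => hpal k h1 (by omega)) ?_
      rw [hji] at hgt
      rw [Nat.sub_self] at hgt
      omega
    · -- j < i
      have hfall : r (p i + 1) + 1 = r (p i) := by
        have h1 : r (p i + 1) = m := hintf i (p i + 1) (by omega) (by omega)
        rw [h1, hpR]
      have hPid : p (i + (j-1) + 1) + p (i - 1 - (j-1)) = 2 * p i + 1 :=
        hF1 i j hj2 hrise hpal (j-1) (by omega)
      rw [show i + (j-1) + 1 = i + j from by omega,
        show i - 1 - (j-1) = i - j from by omega] at hPid
      have hsj := hsS (i - j - 1)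
      rw [show i - j - 1 + 1 = i - j from by omega] at hsj
      have hsij := hsS (i + j)
      have hm1 := hmole (i-j) i (by omega)
      set o := p i - p (i - j) + s (i - j) + 1 with hodef
      have hoeq : p i - o = p (i - j - 1) := by omega
      have hpalr : ∀ k, 1 ≤ k → k < o → r (p i + k + 1) = r (p i - k) := by
        intro k h1 h2
        by_cases hreg : k + p (i - j) ≤ p i
        · exact hF2 i j hj1 hj2 hrise hpal k h1 hreg
        · have hy : r (p i + k + 1) = m := hintf (i+j) (p i + k + 1) (by omega) (by omega)
          have hx : r (p i - k) = m := hgapm (i-j) (p i - k) (by omega) (by omega)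
          rw [hy, hx]
      have hxv : r (p i - o) = m + 1 := by rw [hoeq]; exact hpR _
      have hyv : r (p i + o + 1) = m := hintf (i+j) (p i + o + 1) (by omega) (by omega)
      have hcon := Bfall' hB hfall (by omega) (by omega) hpalr (by rw [hxv, hyv]; omega)
      rw [hxv, hyv] at hcon
      omega
  -- Rise-center identities (fall in s)
  have hR1 : ∀ i j, j ≤ i → s (i+1) + 1 = s i →
      (∀ k, 1 ≤ k → k < j → s (i + k + 1) = s (i - k)) →
      ∀ k, k < j → p (i + k + 1) + p (i - 1 - k) + 1 = 2 * p i := by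
    intro i j hij hfalls hpal k
    induction k with
    | zero =>
      intro h0
      have h1 := hsS i
      have h2 := hsS (i-1)
      rw [show i - 1 + 1 = i from by omega] at h2
      rw [show i + 0 + 1 = i + 1 from by omega, show i - 1 - 0 = i - 1 from by omega]
      omega
    | succ k ih =>
      intro hk
      have hprev := ih (by omega)
      have h1 := hsS (i + k + 1)
      have h2 := hsS (i - 1 - (k+1))
      have hpk := hpal (k+1) (by omega) hk
      rw [show i - 1 - (k+1) + 1 = i - 1 - k from by omega] at h2
      rw [show i + (k+1) + 1 = i + k + 1 + 1 from by omega]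
      rw [show i + (k+1) + 1 = i + k + 1 + 1 from by omega] at hpk
      rw [show i - 1 - k = i - (k+1) from by omega] at h2
      rw [show i - 1 - k = i - (k+1) from by omega] at hprev
      omega
  have hR2 : ∀ i j, 1 ≤ j → j ≤ i → s (i+1) + 1 = s i →
      (∀ k, 1 ≤ k → k < j → s (i + k + 1) = s (i - k)) →
      ∀ o, 1 ≤ o → o + p (i - j) + 1 ≤ p i → r (p i + o) = r (p i - 1 - o) := by
    intro i j hj1 hj2 hfalls hpal o ho1 ho2
    have hPid : p (i + (j-1) + 1) + p (i - 1 - (j-1)) + 1 = 2 * p i :=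
      hR1 i j hj2 hfalls hpal (j-1) (by omega)
    rw [show i + (j-1) + 1 = i + j from by omega,
      show i - 1 - (j-1) = i - j from by omega] at hPid
    have hm1 := hmole (i-j) i (by omega)
    by_cases hyR : r (p i + o) = m + 1
    · obtain ⟨k, hk1, hk2, hk3⟩ := hidx i (i+j) (p i + o) (by omega) (by omega)
        (by omega) hyR
      have hki : i < k := by
        by_contra hh2
        have := hmole k i (by omega)
        omega
      have hPid2 := hR1 i j hj2 hfalls hpal (k - i - 1) (by omega)
      rw [show i + (k - i - 1) + 1 = k from by omega] at hPid2
      have hxp : p (i - 1 - (k - i - 1)) = p i - 1 - o := by omega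
      rw [hyR, ← hxp, hpR]
    · by_cases hxR : r (p i - 1 - o) = m + 1
      · obtain ⟨k, hk1, hk2, hk3⟩ := hidx (i-j) i (p i - 1 - o) (by omega) (by omega)
          (by omega) hxR
        have hki : k < i := by
          by_contra hh2
          have := hmole i k (by omega)
          omega
        have hPid2 := hR1 i j hj2 hfalls hpal (i - 1 - k) (by omega)
        rw [show i - 1 - (i - 1 - k) = k from by omega] at hPid2
        have hyp : p (i + (i - 1 - k) + 1) = p i + o := by omega
        rw [hxR, ← hyp, hpR]
      · have a1 := hmin (p i + o); have a2 := htwo (p i + o)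
        have a3 := hmin (p i - 1 - o); have a4 := htwo (p i - 1 - o)
        omega
  -- CondB clause 1 for s (fall in s)
  have hR3 : ∀ i j, 1 ≤ j → j ≤ i → s (i+1) + 1 = s i →
      (∀ k, 1 ≤ k → k < j → s (i + k + 1) = s (i - k)) →
      s (i + j + 1) < s (i - j) → False := by
    intro i j hj1 hj2 hfalls hpal hlt
    have hsi1 := hsS (i-1)
    rw [show i - 1 + 1 = i from by omega] at hsi1
    have hpi1 : 1 ≤ p i := by omega
    have hre : r (p i - 1) = m := hgapm i (p i - 1) (by omega) (by omega)
    have hrise_r : r (p i - 1 + 1) = r (p i - 1) + 1 := by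
      rw [show p i - 1 + 1 = p i from by omega, hre, hpR]
    have hPid : p (i + (j-1) + 1) + p (i - 1 - (j-1)) + 1 = 2 * p i :=
      hR1 i j hj2 hfalls hpal (j-1) (by omega)
    rw [show i + (j-1) + 1 = i + j from by omega,
      show i - 1 - (j-1) = i - j from by omega] at hPid
    have hm1 := hmole (i-j) i (by omega)
    have hm2 := hmole (i-j) (i-1) (by omega)
    have hsij := hsS (i + j)
    have hpges' := hpges (i - j)
    set o := p i - p (i - j) + s (i + j + 1) with hodef
    have ho1 : 1 ≤ o := by omega
    have hoe : o ≤ p i - 1 := by omega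
    have hpalr : ∀ k, 1 ≤ k → k < o → r (p i - 1 + k + 1) = r (p i - 1 - k) := by
      intro k h1 h2
      rw [show p i - 1 + k + 1 = p i + k from by omega]
      by_cases hreg : k + p (i - j) + 1 ≤ p i
      · exact hR2 i j hj1 hj2 hfalls hpal k h1 hreg
      · have hy : r (p i + k) = m := hintf (i+j) (p i + k) (by omega) (by omega)
        have hx : r (p i - 1 - k) = m := hgapm (i-j) (p i - 1 - k) (by omega) (by omega)
        rw [hy, hx]
    have hyv : r (p i - 1 + o + 1) = m + 1 := by
      rw [show p i - 1 + o + 1 = p (i + j + 1) from by omega]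
      exact hpR _
    have hxv : r (p i - 1 - o) = m := hgapm (i-j) (p i - 1 - o) (by omega) (by omega)
    have hcon := Brise' hB hrise_r ho1 (by omega) hpalr (by rw [hyv, hxv]; omega)
    rw [hyv, hxv] at hcon
    omega
  -- CondA for s, i ≥ 1 : no jump up
  have hA2' : ∀ i, 1 ≤ i → s (i+1) ≤ s i + 1 := by
    intro i hi
    by_contra hh
    push_neg at hh
    have hsi := hsS i
    have hsi1 := hsS (i-1)
    rw [show i - 1 + 1 = i from by omega] at hsi1
    have hfall : r (p i + 1) + 1 = r (p i) := by
      have h1 : r (p i + 1) = m := hintf i (p i + 1) (by omega) (by omega)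
      rw [h1, hpR]
    have hpal : ∀ k, 1 ≤ k → k < s i + 1 → r (p i + k + 1) = r (p i - k) := by
      intro k h1 h2
      rw [hintf i (p i + k + 1) (by omega) (by omega),
        hgapm i (p i - k) (by omega) (by omega)]
    have hxv : r (p i - (s i + 1)) = m + 1 := by
      rw [show p i - (s i + 1) = p (i-1) from by omega]
      exact hpR _
    have hyv : r (p i + (s i + 1) + 1) = m := hintf i (p i + (s i + 1) + 1) (by omega) (by omega)
    have hcon := Bfall' hB hfall (by omega) (by omega) hpal (by rw [hxv, hyv]; omega)
    rw [hxv, hyv] at hcon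
    omega
  -- CondA for s, i ≥ 1 : no jump down
  have hA1' : ∀ i, 1 ≤ i → s i ≤ s (i+1) + 1 := by
    intro i hi
    by_contra hh
    push_neg at hh
    have hsi := hsS i
    have hsi1 := hsS (i-1)
    rw [show i - 1 + 1 = i from by omega] at hsi1
    have hpi1 : 1 ≤ p i := by omega
    have hre : r (p i - 1) = m := hgapm i (p i - 1) (by omega) (by omega)
    have hrise_r : r (p i - 1 + 1) = r (p i - 1) + 1 := by
      rw [show p i - 1 + 1 = p i from by omega, hre, hpR]
    have hpal : ∀ k, 1 ≤ k → k < s (i+1) + 1 → r (p i - 1 + k + 1) = r (p i - 1 - k) := by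
      intro k h1 h2
      rw [show p i - 1 + k + 1 = p i + k from by omega]
      rw [hintf i (p i + k) (by omega) (by omega),
        hgapm i (p i - 1 - k) (by omega) (by omega)]
    have hyv : r (p i - 1 + (s (i+1) + 1) + 1) = m + 1 := by
      rw [show p i - 1 + (s (i+1) + 1) + 1 = p (i+1) from by omega]
      exact hpR _
    have hxv : r (p i - 1 - (s (i+1) + 1)) = m :=
      hgapm i (p i - 1 - (s (i+1) + 1)) (by omega) (by omega)
    have hcon := Brise' hB hrise_r (by omega) (by omega) hpal (by rw [hyv, hxv]; omega)
    rw [hyv, hxv] at hcon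
    omega
  have hs01 : s (0+1) = s 1 := rfl
  have hp01 : p (0+1) = p 1 := rfl
  -- s 1 ≤ s 0
  have hSC1 : s 1 ≤ s 0 := by
    rcases Nat.eq_zero_or_pos (s 1) with h | h
    · omega
    · have hs1 := hsS 0
      rw [hs01, hp01] at hs1
      have hfall : r (p 0 + 1) + 1 = r (p 0) := by
        have h1 : r (p 0 + 1) = m := by
          apply hintf 0 (p 0 + 1) (by omega)
          rw [hs01]; omega
        rw [h1, hpR]
      obtain ⟨j, hj1, hj2, hjlt⟩ := hC.2 (p 0) hfall
      have hL : r (p 0 - j) = m := hint0 _ (by omega)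
      by_contra hh
      push_neg at hh
      have hR' : r (p 0 + j + 1) = m := by
        apply hintf 0 (p 0 + j + 1) (by omega)
        rw [hs01]; omega
      omega
  -- s 0 ≤ s 1 + 1
  have hA0 : s 0 ≤ s 1 + 1 := by
    by_contra hh
    push_neg at hh
    have hs1 := hsS 0
    rw [hs01, hp01] at hs1
    have hp0 : s 1 + 2 ≤ p 0 := by omega
    have hre : r (p 0 - 1) = m := hint0 _ (by omega)
    have hrise_r : r (p 0 - 1 + 1) = r (p 0 - 1) + 1 := by
      rw [show p 0 - 1 + 1 = p 0 from by omega, hre, hpR]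
    have hpal : ∀ k, 1 ≤ k → k < s 1 + 1 → r (p 0 - 1 + k + 1) = r (p 0 - 1 - k) := by
      intro k h1 h2
      rw [show p 0 - 1 + k + 1 = p 0 + k from by omega]
      have ha : r (p 0 + k) = m := by
        apply hintf 0 (p 0 + k) (by omega)
        rw [hs01]; omega
      rw [ha, hint0 (p 0 - 1 - k) (by omega)]
    have hyv : r (p 0 - 1 + (s 1 + 1) + 1) = m + 1 := by
      rw [show p 0 - 1 + (s 1 + 1) + 1 = p 1 from by omega]
      exact hpR _
    have hxv : r (p 0 - 1 - (s 1 + 1)) = m := hint0 _ (by omega)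
    have hcon := Brise' hB hrise_r (by omega) (by omega) hpal (by rw [hyv, hxv]; omega)
    rw [hyv, hxv] at hcon
    omega
  -- assemble conditions for s
  have hcondA : CondA s := by
    intro i
    rw [abs_le]
    rcases Nat.eq_zero_or_pos i with h0 | hpos
    · subst h0
      rw [hs01]
      omega
    · have h1 := hA2' i hpos
      have h2 := hA1' i hpos
      omega
  have hcondB : CondB s := by
    intro i
    constructor
    · intro hf j hj1 hj2 hpal hne
      by_contra hh
      push_neg at hh
      exact hR3 i j hj1 hj2 hf hpal (by omega)
    · intro hrise j hj1 hj2 hpal hne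
      by_contra hh
      push_neg at hh
      exact hF3 i j hj1 hj2 hrise hpal (by omega)
  have hcondC10 : CondC10 s := by
    refine ⟨hSC1, ?_⟩
    intro i hrise
    rcases Nat.eq_zero_or_pos i with h0 | hpos
    · exfalso
      subst h0
      rw [hs01] at hrise
      omega
    · by_cases hD : ∃ j, 1 ≤ j ∧ j ≤ i ∧ s (i + j + 1) ≠ s (i - j)
      · obtain ⟨j0, ⟨h1, h2, h3⟩, hmin'⟩ := exists_min_sat' hD
        have hpal : ∀ k, 1 ≤ k → k < j0 → s (i + k + 1) = s (i - k) := by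
          intro k hk1 hk2
          by_contra hne'
          exact hmin' k hk2 ⟨hk1, by omega, hne'⟩
        rcases Nat.lt_or_ge (s (i + j0 + 1)) (s (i - j0)) with h | h
        · exact ⟨j0, h1, h2, h⟩
        · exact absurd (hF3 i j0 h1 h2 hrise hpal (by omega)) (fun x => x)
      · push_neg at hD
        exfalso
        refine hNOFULL i hpos hrise (fun k h1 h2 => hD k h1 (by omega)) ?_
        have := hD i (by omega) le_rfl
        rw [Nat.sub_self] at this
        omega
  -- infinitely many nonzero s
  have hsnz : ∀ N, ∃ i, N ≤ i ∧ s i ≠ 0 := by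
    intro N
    obtain ⟨t, ht1, ht2⟩ := hinfm (p N + 1)
    have hKs : p (Nat.findGreatest (fun k => p k < t) t) < t :=
      Nat.findGreatest_spec (P := fun k => p k < t)
        (show N ≤ t from by have := hkp N; omega) (by omega)
    have hKN : N ≤ Nat.findGreatest (fun k => p k < t) t :=
      Nat.le_findGreatest (show N ≤ t from by have := hkp N; omega) (by omega)
    set K := Nat.findGreatest (fun k => p k < t) t with hKdef
    have hKmax : ¬ (p (K+1) < t) := by
      intro hcon2
      have := Nat.findGreatest_is_greatest (P := fun k => p k < t) (n := t) (k := K + 1)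
        (by omega) (by have := hkp (K+1); omega)
      exact this hcon2
    have htlt : t < p (K+1) := by
      rcases Nat.lt_or_ge t (p (K+1)) with h | h
      · exact h
      · exfalso
        have heq : p (K+1) = t := by omega
        have := hpR (K+1)
        rw [heq] at this
        omega
    have hnz : s (K+1) ≠ 0 := by
      have := hsS K
      omega
    exact ⟨K+1, by omega, hnz⟩
  -- r is the block sequence
  have hnotpos : ∀ t, (∀ k, p k ≠ t) → r t = m := by
    intro t ht
    rcases Nat.lt_or_ge t (p 0) with h | h
    · exact hint0 t h
    · have hKs : p (Nat.findGreatest (fun k => p k ≤ t) t) ≤ t :=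
        Nat.findGreatest_spec (P := fun k => p k ≤ t) (Nat.zero_le t) h
      set K := Nat.findGreatest (fun k => p k ≤ t) t with hKdef
      have hKlt : p K < t := by
        rcases Nat.eq_or_lt_of_le hKs with he | hl
        · exact absurd he (ht K)
        · exact hl
      have hnext : t < p (K+1) := by
        by_contra hcon2
        push_neg at hcon2
        have := Nat.findGreatest_is_greatest (P := fun k => p k ≤ t) (n := t) (k := K + 1)
          (by omega) (by have := hkp (K+1); omega)
        exact this hcon2
      exact hint K t hKlt hnext
  exact ⟨s, ⟨hcondA, hcondB, hcondC10⟩, hsnz,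
    fun n => blockSeq_eq m n r p s hmono hpR hnotpos hs0 hsS⟩

end Part3

section Main

variable {r : ℕ → ℕ} {m : ℕ}

private lemma last_min_contra (hB : CondB r) (hC : CondC01 r) {i0 : ℕ}
    (hmin : ∀ t, m ≤ r t) (htwo : ∀ t, r t ≤ m + 1)
    (hi0m : r i0 = m) (hi0gt : ∀ t, i0 < t → r t = m + 1) (hpos : 0 < i0) : False := by
  have hrise : r (i0 + 1) = r i0 + 1 := by rw [hi0gt (i0+1) (by omega), hi0m]
  have hback : ∀ j, 1 ≤ j → j ≤ i0 → r (i0 - j) = m + 1 := by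
    intro j
    induction j using Nat.strong_induction_on with
    | _ j ih =>
      intro hj1 hj2
      by_contra hne'
      have hpal : ∀ k, 1 ≤ k → k < j → r (i0 + k + 1) = r (i0 - k) := by
        intro k h1 h2
        rw [hi0gt (i0 + k + 1) (by omega), ih k h2 h1 (by omega)]
      have hcon := Brise hB hrise hj1 hj2 hpal (by
        rw [hi0gt (i0 + j + 1) (by omega)]
        exact fun h => hne' h.symm)
      rw [hi0gt (i0 + j + 1) (by omega)] at hcon
      have := htwo (i0 - j)
      omega
  have hfall : r (i0 - 1 + 1) + 1 = r (i0 - 1) := by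
    rw [show i0 - 1 + 1 = i0 from by omega, hi0m, hback 1 le_rfl (by omega)]
  obtain ⟨j, hj1, hj2, hjlt⟩ := hC.2 (i0 - 1) hfall
  have hL : r (i0 - 1 - j) = m + 1 := by
    rw [show i0 - 1 - j = i0 - (j + 1) from by omega]
    exact hback (j+1) (by omega) (by omega)
  have hR : r (i0 - 1 + j + 1) = m + 1 := by
    rw [show i0 - 1 + j + 1 = i0 + j from by omega]
    exact hi0gt (i0 + j) (by omega)
  omega

end Main

/-- Theorem 4.2: classification of sequences in `M₀₁` that are not identically zero. -/
theorem M01_classification (r : ℕ → ℕ) (hr : MemM01 r) (hne : r ≠ fun _ => 0) :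
    ∃ R : ℕ, 1 ≤ R ∧
      ((∀ i, r i = R) ∨
        (r 0 = R - 1 ∧ ∀ i, r (i + 1) = R) ∨
        (∃ s : ℕ → ℕ, MemM10 s ∧ (∀ N, ∃ i, N ≤ i ∧ s i ≠ 0) ∧
          ∀ n, r n = blockSeq (R - 1) R s n)) := by
  classical
  obtain ⟨hA, hB, hC⟩ := hr
  have hatt : ∃ v, ∃ t, r t = v := ⟨r 0, 0, rfl⟩
  set m := Nat.find hatt with hmdef
  have hattm : ∃ t, r t = m := Nat.find_spec hatt
  have hmin : ∀ t, m ≤ r t := fun t => Nat.find_min' hatt ⟨t, rfl⟩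
  have htwo : ∀ t, r t ≤ m + 1 := two_valued hA hB hC hmin hattm
  by_cases hconst : ∀ t, r t = m
  · refine ⟨m, ?_, Or.inl hconst⟩
    rcases Nat.eq_zero_or_pos m with h0 | h1
    · exfalso
      apply hne
      funext t
      rw [hconst t, h0]
    · exact h1
  · push_neg at hconst
    obtain ⟨t1, ht1⟩ := hconst
    have ht1' : r t1 = m + 1 := by have := hmin t1; have := htwo t1; omega
    by_cases hinfm : ∀ N, ∃ t, N ≤ t ∧ r t = m
    · obtain ⟨s, hs1, hs2, hs3⟩ := part3 hA hB hC hmin htwo hinfm ⟨t1, ht1'⟩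
      refine ⟨m + 1, by omega, Or.inr (Or.inr ⟨s, hs1, hs2, ?_⟩)⟩
      intro n
      rw [show m + 1 - 1 = m from by omega]
      exact hs3 n
    · push_neg at hinfm
      obtain ⟨N, hN⟩ := hinfm
      obtain ⟨t0, ht0⟩ := hattm
      have ht0N : t0 < N := by
        by_contra hh
        exact hN t0 (by omega) ht0
      have hi0m : r (Nat.findGreatest (fun t => r t = m) N) = m :=
        Nat.findGreatest_spec (P := fun t => r t = m) (le_of_lt ht0N) ht0
      set i0 := Nat.findGreatest (fun t => r t = m) N with hi0def
      have hi0gt : ∀ t, i0 < t → r t = m + 1 := by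
        intro t ht
        rcases Nat.lt_or_ge t (N+1) with h | h
        · have h2 := Nat.findGreatest_is_greatest (P := fun t => r t = m) (n := N)
            (k := t) (by omega) (by omega)
          have := hmin t; have := htwo t
          omega
        · have h2 := hN t (by omega)
          have := hmin t; have := htwo t
          omega
      rcases Nat.eq_zero_or_pos i0 with h0 | hpos
      · refine ⟨m + 1, by omega, Or.inr (Or.inl ⟨?_, ?_⟩)⟩
        · rw [show m + 1 - 1 = m from by omega, ← h0]
          exact hi0m
        · intro i
          exact hi0gt (i+1) (by omega)
      · exact absurd (last_min_contra hB hC hmin htwo hi0m hi0gt hpos) (fun x => x)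
end

section
/- Two real numbers θ and θ′ are ± equivalent if and only if ‖q·θ‖ = ‖q·θ′‖ for every positive integer q. -/
lemma distNearestInt_eq (x : ℝ) :
    distNearestInt x = min (Int.fract x) (1 - Int.fract x) := by
  have h0 : 0 ≤ Int.fract x := Int.fract_nonneg x
  have h1 : Int.fract x < 1 := Int.fract_lt_one x
  have hfr : Int.fract x = x - ⌊x⌋ := rfl
  apply le_antisymm
  · rcases le_total (Int.fract x) (1 - Int.fract x) with h | h
    · rw [min_eq_left h]
      have : Int.fract x = |x - (⌊x⌋ : ℤ)| := by
        rw [abs_of_nonneg (by linarith)]; linarith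
      rw [this]
      exact csInf_le ⟨0, fun y ⟨p, hp⟩ => hp ▸ abs_nonneg _⟩ ⟨⌊x⌋, rfl⟩
    · rw [min_eq_right h]
      have : 1 - Int.fract x = |x - ((⌊x⌋ + 1 : ℤ))| := by
        rw [abs_of_nonpos (by push_cast; linarith)]; push_cast; linarith
      rw [this]
      exact csInf_le ⟨0, fun y ⟨p, hp⟩ => hp ▸ abs_nonneg _⟩ ⟨⌊x⌋ + 1, rfl⟩
  · apply le_csInf (Set.range_nonempty _)
    rintro b ⟨p, rfl⟩
    rcases le_or_gt p ⌊x⌋ with hp | hp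
    · have : (p : ℝ) ≤ ⌊x⌋ := by exact_mod_cast hp
      calc min (Int.fract x) (1 - Int.fract x) ≤ Int.fract x := min_le_left _ _
        _ ≤ |x - p| := by rw [abs_of_nonneg (by linarith)]; linarith
    · have : (⌊x⌋ : ℝ) + 1 ≤ p := by exact_mod_cast hp
      calc min (Int.fract x) (1 - Int.fract x) ≤ 1 - Int.fract x := min_le_right _ _
        _ ≤ |x - p| := by rw [abs_of_nonpos (by linarith)]; linarith

lemma distNearestInt_eq_iff (x y : ℝ) :
    distNearestInt x = distNearestInt y ↔
      (∃ k : ℤ, x + y = k) ∨ (∃ k : ℤ, x - y = k) := by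
  have hx0 : 0 ≤ Int.fract x := Int.fract_nonneg x
  have hx1 : Int.fract x < 1 := Int.fract_lt_one x
  have hy0 : 0 ≤ Int.fract y := Int.fract_nonneg y
  have hy1 : Int.fract y < 1 := Int.fract_lt_one y
  have hfx : Int.fract x = x - ⌊x⌋ := rfl
  have hfy : Int.fract y = y - ⌊y⌋ := rfl
  rw [distNearestInt_eq, distNearestInt_eq]
  constructor
  · intro h
    have key : Int.fract x = Int.fract y ∨ Int.fract x + Int.fract y = 1 := by
      rcases le_total (Int.fract x) (1 - Int.fract x) with ha | ha <;>
        rcases le_total (Int.fract y) (1 - Int.fract y) with hb | hb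
      · rw [min_eq_left ha, min_eq_left hb] at h; left; linarith
      · rw [min_eq_left ha, min_eq_right hb] at h; right; linarith
      · rw [min_eq_right ha, min_eq_left hb] at h; right; linarith
      · rw [min_eq_right ha, min_eq_right hb] at h; left; linarith
    rcases key with h' | h'
    · right; exact ⟨⌊x⌋ - ⌊y⌋, by push_cast; linarith⟩
    · left; exact ⟨⌊x⌋ + ⌊y⌋ + 1, by push_cast; linarith⟩
  · rintro (⟨k, hk⟩ | ⟨k, hk⟩)
    · -- x + y = k, so fract x = fract (-y)
      have : Int.fract x = Int.fract (-y) := by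
        rw [show x = -y + (k : ℝ) by linarith, Int.fract_add_intCast]
      rcases eq_or_ne (Int.fract y) 0 with h0 | h0
      · rw [this, Int.fract_neg_eq_zero.mpr h0, h0]
      · rw [this, Int.fract_neg h0]
        rw [show (1 : ℝ) - (1 - Int.fract y) = Int.fract y by ring, min_comm]
    · have : Int.fract x = Int.fract y := by
        rw [show x = y + (k : ℝ) by linarith, Int.fract_add_intCast]
      rw [this]


/-- Two reals are ± equivalent iff `‖qθ‖ = ‖qθ'‖` for every positive integer `q`. -/
theorem pmEquiv_iff_dist (θ θ' : ℝ) :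
    PMEquiv θ θ' ↔ ∀ q : ℕ, 0 < q →
      distNearestInt (q * θ) = distNearestInt (q * θ') := by
  constructor
  · rintro (⟨k, hk⟩ | ⟨k, hk⟩) q hq <;> rw [distNearestInt_eq_iff]
    · left; exact ⟨q * k, by push_cast; nlinarith⟩
    · right; exact ⟨q * k, by push_cast; nlinarith⟩
  · intro h
    have h1 := h 1 one_pos
    rw [distNearestInt_eq_iff] at h1
    simp only [Nat.cast_one, one_mul] at h1
    exact h1
end

section
/- Let (m, m₁, m₂) be a Markoff triple with m > 2 and associated Markoff form f_m, and let α and β be the two roots of f_m(x,1) = 0. Then α and β are not ± equivalent; that is, neither α + β nor α − β is an integer. -/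
/-- For a Markoff number `m > 2`, the two roots of `f_m(x,1) = 0` are not ± equivalent. -/
theorem markoff_roots_not_pmEquiv (m m₁ m₂ u v : ℤ) (hm : 2 < m)
    (hM : IsMarkoffTriple m m₁ m₂) (hu : IsMarkoffU m m₁ m₂ u)
    (hv : m * v = u ^ 2 + 1)
    (α β : ℝ) (hα : IsMarkoffFormRoot m u v α) (hβ : IsMarkoffFormRoot m u v β)
    (hne : α ≠ β) : ¬PMEquiv α β := by
  intro hpm
  have hα' : (m : ℝ) * α ^ 2 + (3 * m - 2 * u) * α + ((v : ℝ) - 3 * u) = 0 := hα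
  have hβ' : (m : ℝ) * β ^ 2 + (3 * m - 2 * u) * β + ((v : ℝ) - 3 * u) = 0 := hβ
  have hv' : (m : ℝ) * v = (u : ℝ) ^ 2 + 1 := by exact_mod_cast congrArg (Int.cast : ℤ → ℝ) hv
  have hfac : (α - β) * ((m : ℝ) * (α + β) + (3 * m - 2 * u)) = 0 := by
    linear_combination hα' - hβ'
  have hs : (m : ℝ) * (α + β) = 2 * u - 3 * m := by
    have := (mul_eq_zero.mp hfac).resolve_left (sub_ne_zero.mpr hne)
    linarith
  have hprod : (m : ℝ) ^ 2 * (α * β) = (u : ℝ) ^ 2 + 1 - 3 * m * u := by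
    linear_combination ((m : ℝ) * α) * hs - (m : ℝ) * hα' + hv'
  rcases hpm with ⟨k, hk⟩ | ⟨k, hk⟩
  · have hint : m * k = 2 * u - 3 * m := by
      have h1 : (m : ℝ) * k = 2 * u - 3 * m := by rw [← hk]; exact hs
      exact_mod_cast h1
    have hdvd : m ∣ 2 * u := ⟨k + 3, by linarith⟩
    have h2 : m ∣ u ^ 2 + 1 := ⟨v, hv.symm⟩
    have hdvd2 : m ∣ 2 := by
      have h3 : m ∣ 2 * (u ^ 2 + 1) - 2 * u * u := dvd_sub (h2.mul_left 2) (hdvd.mul_right u)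
      have h4 : 2 * (u ^ 2 + 1) - 2 * u * u = 2 := by ring
      rwa [h4] at h3
    have := Int.le_of_dvd (by norm_num) hdvd2
    omega
  · have hd : ((m : ℝ) * (α - β)) ^ 2 = 9 * (m : ℝ) ^ 2 - 4 := by
      linear_combination ((m : ℝ) * (α + β) + (2 * u - 3 * m)) * hs - 4 * hprod
    have hint : (m * k) ^ 2 = 9 * m ^ 2 - 4 := by
      have h1 : ((m : ℝ) * k) ^ 2 = 9 * (m : ℝ) ^ 2 - 4 := by rw [← hk]; exact hd
      exact_mod_cast h1
    have hz : ((m * k : ℤ) : ZMod 3) ^ 2 = 2 := by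
      have h5 := congrArg (fun z : ℤ => (z : ZMod 3)) hint
      push_cast at h5 ⊢
      rw [h5]
      have h9 : (9 : ZMod 3) = 0 := rfl
      rw [h9, zero_mul, zero_sub]
      decide
    push_cast at hz
    revert hz
    generalize ((m : ZMod 3) * (k : ZMod 3)) = b
    revert b
    decide
end
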